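/- arXiv:math/0505033 — 6 statements merged into one kernel-verified Lean document; each statement's English description precedes it below -/
import Mathlib

section
/- Let i and n be positive integers with i ≤ n, and let X₁,…,Xₙ be i.i.d. real-valued random variables with E[|X₁|^i] < ∞. For a set partition π of {1,…,i}, define the augmented monomial statistic m̃_π(X₁,…,Xₙ) = ∑_{f} ∏_{B∈π} X_{f(B)}^{|B|}, where the sum ranges over all injective functions f from the blocks of π to {1,…,n}. Then the i-th k-statistic k_i = ∑_{π∈Π_i} ((−1)^{|π|−1}(|π|−1)!/(n)_{|π|}) · m̃_π(X₁,…,Xₙ) satisfies E[k_i] = κ_i, where κ_i = ∑_{π∈Π_i} (−1)^{|π|−1}(|π|−1)! ∏_{B∈π} m_{|B|} is the i-th cumulant of X₁; that is, k_i is an unbiased estimator of the i-th cumulant. -/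
open Finset MeasureTheory ProbabilityTheory

/-- Auxiliary: for an independent family and an injective-on-`s` reindexing, the product of
powers is integrable and its expectation is the product of expectations. -/
lemma aux_indep_prod_pow
    {Ω : Type*} [MeasurableSpace Ω] (μ : Measure Ω) [IsProbabilityMeasure μ]
    {n : ℕ} (X : Fin n → Ω → ℝ) (hmeas : ∀ l, Measurable (X l))
    (hindep : iIndepFun X μ)
    {κ : Type*} [DecidableEq κ] (s : Finset κ) (j : κ → Fin n) (hj : Set.InjOn j s)
    (e : κ → ℕ) (hint : ∀ k ∈ s, Integrable (fun ω => X (j k) ω ^ e k) μ) :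
    Integrable (fun ω => ∏ k ∈ s, X (j k) ω ^ e k) μ ∧
      ∫ ω, ∏ k ∈ s, X (j k) ω ^ e k ∂μ = ∏ k ∈ s, ∫ ω, X (j k) ω ^ e k ∂μ := by
  classical
  induction s using Finset.induction_on with
  | empty => simp
  | insert _ _ hk =>
    rename_i k s ih
    have hj' : Set.InjOn j s := hj.mono (by intro x hx; exact Finset.mem_insert_of_mem hx)
    have hint' : ∀ k' ∈ s, Integrable (fun ω => X (j k') ω ^ e k') μ :=
      fun k' hk' => hint k' (Finset.mem_insert_of_mem hk')
    obtain ⟨ihInt, ihEq⟩ := ih hj' hint'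
    -- independence of the product over `s` and the factor at `k`
    have hST : Disjoint (s.image j) ({j k} : Finset (Fin n)) := by
      simp only [Finset.disjoint_singleton_right, Finset.mem_image, not_exists]
      rintro k' ⟨hk', hjk⟩
      exact hk (by
        have := hj (Finset.mem_insert_of_mem hk') (Finset.mem_insert_self k s) hjk
        rwa [this] at hk')
    have H := hindep.indepFun_finset (s.image j) {j k} hST hmeas
    set S := s.image j with hS
    let φ : ((l : {x // x ∈ S}) → ℝ) → ℝ :=
      fun v => ∏ k' ∈ s.attach, v ⟨j k', by
        exact Finset.mem_image.2 ⟨k'.1, k'.2, rfl⟩⟩ ^ e k'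
    let ψ : ((l : {x // x ∈ ({j k} : Finset (Fin n))}) → ℝ) → ℝ :=
      fun v => v ⟨j k, Finset.mem_singleton_self _⟩ ^ e k
    have hφ : Measurable φ :=
      Finset.measurable_prod _ fun k' _ => (measurable_pi_apply _).pow_const _
    have hψ : Measurable ψ := (measurable_pi_apply _).pow_const _
    have hIndep : IndepFun (fun a => ∏ k' ∈ s, X (j k') a ^ e k')
        (fun a => X (j k) a ^ e k) μ := by
      have := H.comp hφ hψ
      have h1 : (φ ∘ fun a (l : {x // x ∈ S}) => X l a)
          = fun a => ∏ k' ∈ s, X (j k') a ^ e k' := by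
        funext a
        simp only [Function.comp, φ]
        exact Finset.prod_attach s fun k' => X (j k') a ^ e k'
      have h2 : (ψ ∘ fun a (l : {x // x ∈ ({j k} : Finset (Fin n))}) => X l a)
          = fun a => X (j k) a ^ e k := rfl
      rwa [h1, h2] at this
    have hIndep' := hIndep.symm
    have hmulInt : Integrable
        (fun ω => X (j k) ω ^ e k * ∏ k' ∈ s, X (j k') ω ^ e k') μ := by
      have := hIndep'.integrable_mul (hint k (Finset.mem_insert_self k s)) ihInt
      exact this
    have hmulEq : ∫ ω, X (j k) ω ^ e k * ∏ k' ∈ s, X (j k') ω ^ e k' ∂μ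
        = (∫ ω, X (j k) ω ^ e k ∂μ) * ∫ ω, ∏ k' ∈ s, X (j k') ω ^ e k' ∂μ := by
      have := hIndep'.integral_mul_eq_mul_integral (hint k (Finset.mem_insert_self k s)).aestronglyMeasurable ihInt.aestronglyMeasurable
      simpa [Pi.mul_apply] using this
    constructor
    · simpa only [Finset.prod_insert hk] using hmulInt
    · simp only [Finset.prod_insert hk]
      rw [hmulEq, ihEq]

/-- For i.i.d. real random variables `X₁,…,Xₙ` with `E[|X₁|^i] < ∞` and `i ≤ n`,
the `i`-th `k`-statistic
`k_i = ∑_{π ∈ Π_i} ((−1)^{|π|−1}(|π|−1)!/(n)_{|π|}) m̃_π(X)`, where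
`m̃_π(X) = ∑_{f} ∏_{B ∈ π} X_{f(B)}^{|B|}` (sum over injective `f` from the blocks of `π`
to `{1,…,n}`), is an unbiased estimator of the `i`-th cumulant
`κ_i = ∑_{π ∈ Π_i} (−1)^{|π|−1}(|π|−1)! ∏_{B ∈ π} m_{|B|}`. -/
theorem kstatistic_unbiased_for_cumulant
    {Ω : Type*} [MeasurableSpace Ω] (μ : Measure Ω) [IsProbabilityMeasure μ]
    (i n : ℕ) (hi : 0 < i) (hin : i ≤ n) (hn : 0 < n)
    (X : Fin n → Ω → ℝ) (hmeas : ∀ l, Measurable (X l))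
    (hindep : iIndepFun X μ)
    (hident : ∀ l, IdentDistrib (X l) (X ⟨0, hn⟩) μ μ)
    (hint : Integrable (fun ω => |X ⟨0, hn⟩ ω| ^ i) μ) :
    ∫ ω, (∑ π : Finpartition (univ : Finset (Fin i)),
        ((-1 : ℝ) ^ (π.parts.card - 1) * ((π.parts.card - 1).factorial : ℝ) /
            (n.descFactorial π.parts.card : ℝ)) *
          ∑ f ∈ (univ : Finset ({B // B ∈ π.parts} → Fin n)).filter Function.Injective,
            ∏ B : {B // B ∈ π.parts}, X (f B) ω ^ B.val.card) ∂μ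
      = ∑ π : Finpartition (univ : Finset (Fin i)),
          (-1 : ℝ) ^ (π.parts.card - 1) * ((π.parts.card - 1).factorial : ℝ) *
            ∏ B ∈ π.parts, ∫ ω, X ⟨0, hn⟩ ω ^ B.card ∂μ := by
  classical
  set X0 : Ω → ℝ := X ⟨0, hn⟩ with hX0
  -- integrability of powers up to i
  have hX0r : ∀ r ≤ i, Integrable (fun ω => X0 ω ^ r) μ := by
    intro r hr
    refine Integrable.mono' ((integrable_const (1 : ℝ)).add hint)
      ((hmeas _).pow_const r).aestronglyMeasurable (ae_of_all _ fun ω => ?_)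
    simp only [Pi.add_apply]
    rw [Real.norm_eq_abs, abs_pow]
    rcases le_or_gt (|X0 ω|) 1 with h | h
    · have h1 : |X0 ω| ^ r ≤ 1 := pow_le_one₀ (abs_nonneg _) h
      have h2 : (0 : ℝ) ≤ |X0 ω| ^ i := pow_nonneg (abs_nonneg _) _
      linarith
    · have h1 : |X0 ω| ^ r ≤ |X0 ω| ^ i := pow_le_pow_right₀ h.le hr
      linarith
  have hidr : ∀ l r, IdentDistrib (fun ω => X l ω ^ r) (fun ω => X0 ω ^ r) μ μ := by
    intro l r
    exact (hident l).comp (measurable_id.pow_const r)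
  have hXr : ∀ (l) (r : ℕ), r ≤ i → Integrable (fun ω => X l ω ^ r) μ := by
    intro l r hr
    exact ((hidr l r).integrable_iff).2 (hX0r r hr)
  have hEr : ∀ (l) (r : ℕ), ∫ ω, X l ω ^ r ∂μ = ∫ ω, X0 ω ^ r ∂μ :=
    fun l r => (hidr l r).integral_eq
  -- block sizes are at most i
  have hblock : ∀ (π : Finpartition (univ : Finset (Fin i))) (B : Finset (Fin i)),
      B ∈ π.parts → B.card ≤ i := by
    intro π B hB
    have := Finset.card_le_card (π.le hB)
    simpa using this
  -- the key integral computation for a fixed partition and injective f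
  have hkey : ∀ (π : Finpartition (univ : Finset (Fin i)))
      (f : {B // B ∈ π.parts} → Fin n), Function.Injective f →
      Integrable (fun ω => ∏ B : {B // B ∈ π.parts}, X (f B) ω ^ B.val.card) μ ∧
      ∫ ω, ∏ B : {B // B ∈ π.parts}, X (f B) ω ^ B.val.card ∂μ
        = ∏ B : {B // B ∈ π.parts}, ∫ ω, X0 ω ^ B.val.card ∂μ := by
    intro π f hf
    have := aux_indep_prod_pow μ X hmeas hindep (Finset.univ : Finset {B // B ∈ π.parts})
      f (hf.injOn) (fun B => B.val.card)
      (fun B _ => hXr (f B) B.val.card (hblock π B.val B.prop))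
    refine ⟨this.1, ?_⟩
    rw [this.2]
    exact Finset.prod_congr rfl fun B _ => hEr (f B) B.val.card
  -- integrability of each summand
  have hsummand : ∀ π : Finpartition (univ : Finset (Fin i)),
      Integrable (fun ω =>
        ((-1 : ℝ) ^ (π.parts.card - 1) * ((π.parts.card - 1).factorial : ℝ) /
            (n.descFactorial π.parts.card : ℝ)) *
          ∑ f ∈ (univ : Finset ({B // B ∈ π.parts} → Fin n)).filter Function.Injective,
            ∏ B : {B // B ∈ π.parts}, X (f B) ω ^ B.val.card) μ := by
    intro π
    refine Integrable.const_mul ?_ _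
    refine integrable_finset_sum _ fun f hf => ?_
    exact (hkey π f (Finset.mem_filter.1 hf).2).1
  rw [integral_finset_sum _ fun π _ => hsummand π]
  refine Finset.sum_congr rfl fun π _ => ?_
  rw [integral_const_mul, integral_finset_sum _ fun f hf => (hkey π f (Finset.mem_filter.1 hf).2).1]
  have hsum : ∑ f ∈ (univ : Finset ({B // B ∈ π.parts} → Fin n)).filter Function.Injective,
      ∫ ω, ∏ B : {B // B ∈ π.parts}, X (f B) ω ^ B.val.card ∂μ
      = ((n.descFactorial π.parts.card : ℝ)) *
        ∏ B : {B // B ∈ π.parts}, ∫ ω, X0 ω ^ B.val.card ∂μ := by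
    rw [Finset.sum_congr rfl fun f hf => (hkey π f (Finset.mem_filter.1 hf).2).2]
    rw [Finset.sum_const, nsmul_eq_mul]
    congr 1
    have hcard : ((univ : Finset ({B // B ∈ π.parts} → Fin n)).filter Function.Injective).card
        = Fintype.card ({B // B ∈ π.parts} ↪ Fin n) := by
      rw [← Fintype.card_subtype]
      exact Fintype.card_congr (Equiv.subtypeInjectiveEquivEmbedding _ _)
    rw [hcard, Fintype.card_embedding_eq, Fintype.card_fin, Fintype.card_coe]
  rw [hsum]
  have hprod : ∏ B : {B // B ∈ π.parts}, ∫ ω, X0 ω ^ B.val.card ∂μ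
      = ∏ B ∈ π.parts, ∫ ω, X0 ω ^ B.card ∂μ := by
    exact Finset.prod_coe_sort π.parts fun B => ∫ ω, X0 ω ^ B.card ∂μ
  rw [hprod]
  have hd : ((n.descFactorial π.parts.card : ℕ) : ℝ) ≠ 0 := by
    have hle : π.parts.card ≤ n := le_trans (by simpa using π.card_parts_le_card) hin
    have : n.descFactorial π.parts.card ≠ 0 := by
      intro h
      exact absurd (Nat.descFactorial_eq_zero_iff_lt.1 h) (not_lt.2 hle)
    exact_mod_cast this
  field_simp
end

section
/- Let i and n be positive integers with i ≤ n. Let Z₁,…,Zₙ : Ω → ℝ^i be i.i.d. random vectors, each distributed as a vector (Y₁,…,Y_i) with E[∏_{t∈B} |Y_t|] < ∞ for every nonempty subset B ⊆ {1,…,i}. Then the multivariate k-statistic ∑_{π∈Π_i} ((−1)^{|π|−1}(|π|−1)!/(n)_{|π|}) ∑_{f} ∏_{B∈π} ∏_{t∈B} (Z_{f(B)})_t, where the inner sum ranges over all injective functions f from the blocks of π to {1,…,n}, has expectation equal to the joint cumulant κ(Y₁,…,Y_i); that is, it is an unbiased estimator of the joint cumulant. -/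
open Finset MeasureTheory ProbabilityTheory

/-- Auxiliary: a finite product of independent integrable real random variables is
integrable and its integral is the product of the integrals. -/
lemma aux_indep_prod {Ω : Type*} [MeasurableSpace Ω] {μ : Measure Ω} [IsProbabilityMeasure μ]
    {κ : Type*} {X : κ → Ω → ℝ} (hmeas : ∀ j, Measurable (X j))
    (hindep : iIndepFun X μ)
    (s : Finset κ) (hint : ∀ j ∈ s, Integrable (X j) μ) :
    Integrable (fun ω => ∏ j ∈ s, X j ω) μ ∧
      ∫ ω, ∏ j ∈ s, X j ω ∂μ = ∏ j ∈ s, ∫ ω, X j ω ∂μ := by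
  classical
  induction s using Finset.cons_induction with
  | empty => simp
  | cons a s ha ih =>
    obtain ⟨h1, h2⟩ := ih (fun j hj => hint j (Finset.mem_cons_of_mem hj))
    have hprod : (fun ω => ∏ j ∈ s, X j ω) = ∏ j ∈ s, X j := by
      funext ω; simp
    have hindep' : IndepFun (fun ω => ∏ j ∈ s, X j ω) (X a) μ := by
      rw [hprod]
      exact hindep.indepFun_finsetProd_of_notMem hmeas ha
    have hintA : Integrable (X a) μ := hint a (Finset.mem_cons_self a s)
    have hmul : Integrable (fun ω => (∏ j ∈ s, X j ω) * X a ω) μ :=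
      hindep'.integrable_mul h1 hintA
    have hintmul : ∫ ω, (∏ j ∈ s, X j ω) * X a ω ∂μ
        = (∫ ω, ∏ j ∈ s, X j ω ∂μ) * ∫ ω, X a ω ∂μ :=
      hindep'.integral_fun_mul_eq_mul_integral h1.1 hintA.1
    constructor
    · refine hmul.congr (Filter.Eventually.of_forall fun ω => ?_)
      show (∏ j ∈ s, X j ω) * X a ω = ∏ j ∈ Finset.cons a s ha, X j ω
      rw [Finset.prod_cons, mul_comm]
    · calc ∫ ω, ∏ j ∈ Finset.cons a s ha, X j ω ∂μ
          = ∫ ω, (∏ j ∈ s, X j ω) * X a ω ∂μ := by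
            congr 1; funext ω; rw [Finset.prod_cons, mul_comm]
        _ = (∫ ω, ∏ j ∈ s, X j ω ∂μ) * ∫ ω, X a ω ∂μ := hintmul
        _ = ∏ j ∈ Finset.cons a s ha, ∫ ω, X j ω ∂μ := by
            rw [h2, Finset.prod_cons, mul_comm]

/-- Let `Z₁,…,Zₙ : Ω → ℝ^i` be i.i.d. random vectors, each distributed as
`(Y₁,…,Y_i)` with `E[∏_{t ∈ B} |Y_t|] < ∞` for all nonempty `B ⊆ {1,…,i}`. Then the
multivariate `k`-statistic
`∑_{π ∈ Π_i} ((−1)^{|π|−1}(|π|−1)!/(n)_{|π|}) ∑_{f} ∏_{B ∈ π} ∏_{t ∈ B} (Z_{f(B)})_t`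
(with `f` injective from the blocks of `π` to `{1,…,n}`) is an unbiased estimator of the
joint cumulant `κ(Y₁,…,Y_i) = ∑_{π ∈ Π_i} (−1)^{|π|−1}(|π|−1)! ∏_{B ∈ π} E[∏_{t ∈ B} Y_t]`. -/
theorem multivariate_kstatistic_unbiased_for_joint_cumulant
    {Ω : Type*} [MeasurableSpace Ω] (μ : Measure Ω) [IsProbabilityMeasure μ]
    (i n : ℕ) (hi : 0 < i) (hin : i ≤ n) (hn : 0 < n)
    (Z : Fin n → Ω → (Fin i → ℝ)) (hmeasZ : ∀ l, Measurable (Z l))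
    (hindep : iIndepFun Z μ)
    (Y : Fin i → Ω → ℝ) (hmeasY : ∀ t, Measurable (Y t))
    (hident : ∀ l, IdentDistrib (Z l) (fun ω t => Y t ω) μ μ)
    (hint : ∀ B : Finset (Fin i), B.Nonempty →
      Integrable (fun ω => ∏ t ∈ B, |Y t ω|) μ) :
    ∫ ω, (∑ π : Finpartition (univ : Finset (Fin i)),
        ((-1 : ℝ) ^ (π.parts.card - 1) * ((π.parts.card - 1).factorial : ℝ) /
            (n.descFactorial π.parts.card : ℝ)) *
          ∑ f ∈ (univ : Finset ({B // B ∈ π.parts} → Fin n)).filter Function.Injective,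
            ∏ B : {B // B ∈ π.parts}, ∏ t ∈ B.val, Z (f B) ω t) ∂μ
      = ∑ π : Finpartition (univ : Finset (Fin i)),
          (-1 : ℝ) ^ (π.parts.card - 1) * ((π.parts.card - 1).factorial : ℝ) *
            ∏ B ∈ π.parts, ∫ ω, ∏ t ∈ B, Y t ω ∂μ := by
  classical
  -- Integrability of products of Y over nonempty blocks
  have hintY : ∀ B : Finset (Fin i), B.Nonempty →
      Integrable (fun ω => ∏ t ∈ B, Y t ω) μ := by
    intro B hB
    refine (hint B hB).mono' ?_ (Filter.Eventually.of_forall fun ω => ?_)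
    · exact (Finset.measurable_prod B fun t _ => hmeasY t).aestronglyMeasurable
    · rw [Real.norm_eq_abs, Finset.abs_prod]
  -- Key per-partition, per-injective-function fact
  have key : ∀ (π : Finpartition (univ : Finset (Fin i)))
      (f : {B // B ∈ π.parts} → Fin n), Function.Injective f →
      Integrable (fun ω => ∏ B : {B // B ∈ π.parts}, ∏ t ∈ B.val, Z (f B) ω t) μ ∧
      ∫ ω, ∏ B : {B // B ∈ π.parts}, ∏ t ∈ B.val, Z (f B) ω t ∂μ
        = ∏ B ∈ π.parts, ∫ ω, ∏ t ∈ B, Y t ω ∂μ := by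
    intro π f hf
    -- define per-index functions
    set g : Fin n → (Fin i → ℝ) → ℝ := fun l v =>
      ∏ B : {B // B ∈ π.parts}, if f B = l then ∏ t ∈ B.val, v t else 1 with hg
    have hgmeas : ∀ l, Measurable (g l) := by
      intro l
      refine Finset.measurable_prod _ fun B _ => ?_
      by_cases h : f B = l
      · simpa [h] using Finset.measurable_prod (B : Finset (Fin i))
          (fun t _ => measurable_pi_apply t)
      · simpa [h] using measurable_const
    set X : Fin n → Ω → ℝ := fun l ω => g l (Z l ω) with hX
    have hXmeas : ∀ l, Measurable (X l) := fun l => (hgmeas l).comp (hmeasZ l)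
    have hXindep : iIndepFun X μ :=
      hindep.comp g hgmeas
    -- On the image of f, X (f B₀) is the block product
    have hXval : ∀ B₀ : {B // B ∈ π.parts}, X (f B₀) = fun ω => ∏ t ∈ B₀.val, Z (f B₀) ω t := by
      intro B₀
      funext ω
      simp only [hX, hg]
      rw [Fintype.prod_eq_single B₀ (fun B hB => if_neg (fun h => hB (hf h)))]
      rw [if_pos rfl]
    -- identical distribution transfer for block products
    have hIdent : ∀ (l : Fin n) (B : Finset (Fin i)),
        IdentDistrib (fun ω => ∏ t ∈ B, Z l ω t) (fun ω => ∏ t ∈ B, Y t ω) μ μ := by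
      intro l B
      have := (hident l).comp (u := fun v : Fin i → ℝ => ∏ t ∈ B, v t)
        (Finset.measurable_prod B fun t _ => measurable_pi_apply t)
      simpa [Function.comp_def] using this
    have hXint : ∀ B₀ : {B // B ∈ π.parts}, Integrable (X (f B₀)) μ := by
      intro B₀
      rw [hXval B₀]
      exact (hIdent (f B₀) B₀.val).integrable_iff.mpr
        (hintY B₀.val (π.nonempty_of_mem_parts B₀.2))
    have hXintegral : ∀ B₀ : {B // B ∈ π.parts},
        ∫ ω, X (f B₀) ω ∂μ = ∫ ω, ∏ t ∈ B₀.val, Y t ω ∂μ := by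
      intro B₀
      rw [hXval B₀]
      exact (hIdent (f B₀) B₀.val).integral_eq
    -- apply the auxiliary lemma on the image of f
    have himage : ∀ j ∈ Finset.image f Finset.univ, Integrable (X j) μ := by
      intro j hj
      obtain ⟨B₀, _, rfl⟩ := Finset.mem_image.mp hj
      exact hXint B₀
    obtain ⟨hInt, hEq⟩ := aux_indep_prod hXmeas hXindep (Finset.image f Finset.univ) himage
    -- rewrite products over the image back to products over the subtype
    have hprodX : ∀ ω, ∏ j ∈ Finset.image f Finset.univ, X j ω
        = ∏ B : {B // B ∈ π.parts}, ∏ t ∈ B.val, Z (f B) ω t := by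
      intro ω
      rw [Finset.prod_image (fun a _ b _ h => hf h)]
      exact Finset.prod_congr rfl fun B _ => by rw [congrFun (hXval B) ω]
    constructor
    · exact hInt.congr (Filter.Eventually.of_forall fun ω => hprodX ω)
    · calc ∫ ω, ∏ B : {B // B ∈ π.parts}, ∏ t ∈ B.val, Z (f B) ω t ∂μ
          = ∫ ω, ∏ j ∈ Finset.image f Finset.univ, X j ω ∂μ := by
            congr 1; funext ω; rw [hprodX ω]
        _ = ∏ j ∈ Finset.image f Finset.univ, ∫ ω, X j ω ∂μ := hEq
        _ = ∏ B : {B // B ∈ π.parts}, ∫ ω, ∏ t ∈ B.val, Y t ω ∂μ := by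
            rw [Finset.prod_image (fun a _ b _ h => hf h)]
            exact Finset.prod_congr rfl fun B _ => hXintegral B
        _ = ∏ B ∈ π.parts, ∫ ω, ∏ t ∈ B, Y t ω ∂μ :=
            Finset.prod_coe_sort π.parts (fun B => ∫ ω, ∏ t ∈ B, Y t ω ∂μ)
  -- integrability of each f-term
  have hintf : ∀ (π : Finpartition (univ : Finset (Fin i))),
      ∀ f ∈ (univ : Finset ({B // B ∈ π.parts} → Fin n)).filter Function.Injective,
      Integrable (fun ω => ∏ B : {B // B ∈ π.parts}, ∏ t ∈ B.val, Z (f B) ω t) μ := by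
    intro π f hfm
    exact (key π f (Finset.mem_filter.mp hfm).2).1
  -- integrability of each π-term
  have hintπ : ∀ π : Finpartition (univ : Finset (Fin i)),
      Integrable (fun ω =>
        ((-1 : ℝ) ^ (π.parts.card - 1) * ((π.parts.card - 1).factorial : ℝ) /
            (n.descFactorial π.parts.card : ℝ)) *
          ∑ f ∈ (univ : Finset ({B // B ∈ π.parts} → Fin n)).filter Function.Injective,
            ∏ B : {B // B ∈ π.parts}, ∏ t ∈ B.val, Z (f B) ω t) μ := by
    intro π
    exact (integrable_finset_sum _ (hintf π)).const_mul _
  rw [integral_finset_sum _ (fun π _ => hintπ π)]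
  refine Finset.sum_congr rfl fun π _ => ?_
  rw [integral_const_mul, integral_finset_sum _ (hintf π)]
  -- each term of the f-sum has the same value
  have hsum : ∑ f ∈ (univ : Finset ({B // B ∈ π.parts} → Fin n)).filter Function.Injective,
      ∫ ω, ∏ B : {B // B ∈ π.parts}, ∏ t ∈ B.val, Z (f B) ω t ∂μ
      = ((n.descFactorial π.parts.card : ℝ)) * ∏ B ∈ π.parts, ∫ ω, ∏ t ∈ B, Y t ω ∂μ := by
    rw [Finset.sum_congr rfl (fun f hf => (key π f (Finset.mem_filter.mp hf).2).2),
      Finset.sum_const, nsmul_eq_mul]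
    congr 2
    -- count injective functions
    rw [← Fintype.card_subtype]
    rw [Fintype.card_congr (Equiv.subtypeInjectiveEquivEmbedding _ _),
      Fintype.card_embedding_eq, Fintype.card_fin, Fintype.card_coe]
  rw [hsum]
  have hdesc : (n.descFactorial π.parts.card : ℝ) ≠ 0 := by
    have hle : π.parts.card ≤ n := le_trans (le_trans π.card_parts_le_card (by simp)) hin
    exact_mod_cast fun h => (Nat.descFactorial_eq_zero_iff_lt.mp (by exact_mod_cast h)).not_ge hle
  field_simp
end

section
/- Let r ≥ 1 and n ≥ r + 1 be integers and let X₁,…,Xₙ be i.i.d. real-valued random variables with E[|X₁|^r] < ∞. For 0 ≤ k ≤ r define the statistic T_k = ∑ X_{j₀}^{r−k} X_{j₁} X_{j₂} ⋯ X_{j_k}, where the sum ranges over all injective tuples (j₀, j₁, …, j_k) of indices in {1,…,n}. Then the h-statistic h_r = ∑_{k=0}^{r} C(r,k) ((−1)^k/(n)_{k+1}) T_k satisfies E[h_r] = E[(X₁ − m₁)^r]; that is, h_r is an unbiased estimator of the r-th central moment. -/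
open Finset MeasureTheory ProbabilityTheory

section Aux

variable {Ω : Type*} [MeasurableSpace Ω] {μ : Measure Ω} [IsProbabilityMeasure μ]

/-- Product of a finite family of independent integrable real random variables is integrable,
and its expectation is the product of expectations. -/
lemma aux_prod_indep {ι : Type*} (f : ι → Ω → ℝ)
    (hf : iIndepFun f μ) (hm : ∀ i, Measurable (f i))
    (hi : ∀ i, Integrable (f i) μ) (s : Finset ι) :
    Integrable (fun ω => ∏ i ∈ s, f i ω) μ ∧
      (∫ ω, ∏ i ∈ s, f i ω ∂μ) = ∏ i ∈ s, ∫ ω, f i ω ∂μ := by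
  classical
  induction s using Finset.cons_induction with
  | empty => simp
  | cons a s ha ih =>
    have hind : IndepFun (∏ j ∈ s, f j) (f a) μ :=
      hf.indepFun_finsetProd_of_notMem hm ha
    have hps : (∏ j ∈ s, f j) = fun ω => ∏ j ∈ s, f j ω := by
      funext ω; simp [Finset.prod_apply]
    rw [hps] at hind
    have hint1 : Integrable (fun ω => (∏ j ∈ s, f j ω) * f a ω) μ := by
      have := hind.integrable_mul ih.1 (hi a)
      exact this
    constructor
    · simp only [Finset.prod_cons]
      have : (fun ω => f a ω * ∏ j ∈ s, f j ω)
          = fun ω => (∏ j ∈ s, f j ω) * f a ω := by funext ω; ring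
      rw [this]; exact hint1
    · simp only [Finset.prod_cons]
      have h1 : (∫ ω, f a ω * ∏ j ∈ s, f j ω ∂μ)
          = ∫ ω, (∏ j ∈ s, f j ω) * f a ω ∂μ := by
        congr 1; funext ω; ring
      rw [h1]
      have h2 : (∫ ω, (∏ j ∈ s, f j ω) * f a ω ∂μ)
          = (∫ ω, ∏ j ∈ s, f j ω ∂μ) * ∫ ω, f a ω ∂μ :=
        hind.integral_mul_eq_mul_integral ih.1.aestronglyMeasurable (hi a).aestronglyMeasurable
      rw [h2, ih.2]; ring

lemma aux_int_pow {Y : Ω → ℝ} (hY : Measurable Y) {r : ℕ}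
    (h : Integrable (fun ω => |Y ω| ^ r) μ) {e : ℕ} (he : e ≤ r) :
    Integrable (fun ω => Y ω ^ e) μ := by
  have hb : Integrable (fun ω => 1 + |Y ω| ^ r) μ := (integrable_const 1).add h
  refine hb.mono' ((hY.pow_const e).aestronglyMeasurable) ?_
  filter_upwards with ω
  have hn : ‖Y ω ^ e‖ = |Y ω| ^ e := by rw [Real.norm_eq_abs, abs_pow]
  rw [hn]
  rcases le_total (|Y ω|) 1 with h1 | h1
  · have : |Y ω| ^ e ≤ 1 := pow_le_one₀ (abs_nonneg _) h1
    have h2 : (0:ℝ) ≤ |Y ω| ^ r := by positivity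
    linarith
  · have : |Y ω| ^ e ≤ |Y ω| ^ r := pow_le_pow_right₀ h1 he
    linarith

end Aux

/-- For i.i.d. real random variables `X₁,…,Xₙ` with `E[|X₁|^r] < ∞`, `r ≥ 1`,
`n ≥ r + 1`, let `T_k = ∑ X_{j₀}^{r−k} X_{j₁} ⋯ X_{j_k}` (sum over injective `(k+1)`-tuples of
indices). Then the `h`-statistic `h_r = ∑_{k=0}^r C(r,k) ((−1)^k/(n)_{k+1}) T_k` satisfies
`E[h_r] = E[(X₁ − m₁)^r]`: it is an unbiased estimator of the `r`-th central moment. -/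
theorem hstatistic_unbiased_for_central_moment
    {Ω : Type*} [MeasurableSpace Ω] (μ : Measure Ω) [IsProbabilityMeasure μ]
    (r n : ℕ) (hr : 1 ≤ r) (hn : r + 1 ≤ n)
    (X : Fin n → Ω → ℝ) (hmeas : ∀ l, Measurable (X l))
    (hindep : iIndepFun X μ)
    (hident : ∀ l, IdentDistrib (X l) (X ⟨0, by omega⟩) μ μ)
    (hint : Integrable (fun ω => |X ⟨0, by omega⟩ ω| ^ r) μ) :
    ∫ ω, (∑ k ∈ Finset.range (r + 1),
        (r.choose k : ℝ) * ((-1 : ℝ) ^ k / (n.descFactorial (k + 1) : ℝ)) *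
          ∑ g ∈ (univ : Finset (Fin (k + 1) → Fin n)).filter Function.Injective,
            X (g 0) ω ^ (r - k) * ∏ s : Fin k, X (g s.succ) ω) ∂μ
      = ∫ ω, (X ⟨0, by omega⟩ ω - ∫ ω', X ⟨0, by omega⟩ ω' ∂μ) ^ r ∂μ := by
  classical
  set i0 : Fin n := ⟨0, by omega⟩ with hi0
  set M : ℕ → ℝ := fun e => ∫ ω, X i0 ω ^ e ∂μ with hM
  -- integrability of powers
  have hpowint : ∀ (l : Fin n) (e : ℕ), e ≤ r → Integrable (fun ω => X l ω ^ e) μ := by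
    intro l e he
    have hid : IdentDistrib (fun ω => X l ω ^ e) (fun ω => X i0 ω ^ e) μ μ :=
      (hident l).comp (measurable_id.pow_const e)
    exact hid.integrable_iff.mpr (aux_int_pow (hmeas i0) hint he)
  have hpoweq : ∀ (l : Fin n) (e : ℕ), (∫ ω, X l ω ^ e ∂μ) = M e := by
    intro l e
    have hid : IdentDistrib (fun ω => X l ω ^ e) (fun ω => X i0 ω ^ e) μ μ :=
      (hident l).comp (measurable_id.pow_const e)
    exact hid.integral_eq
  -- the product term for an injective g
  have key : ∀ k, k ≤ r → ∀ g : Fin (k + 1) → Fin n, Function.Injective g →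
      Integrable (fun ω => X (g 0) ω ^ (r - k) * ∏ s : Fin k, X (g s.succ) ω) μ ∧
      (∫ ω, X (g 0) ω ^ (r - k) * ∏ s : Fin k, X (g s.succ) ω ∂μ)
        = M (r - k) * M 1 ^ k := by
    intro k hk g hg
    set E : Fin n → ℕ := fun j => if j = g 0 then r - k else 1 with hE
    set f : Fin n → Ω → ℝ := fun j ω => X j ω ^ E j with hf
    have hfm : ∀ j, Measurable (f j) := fun j => (hmeas j).pow_const _
    have hfindep : iIndepFun f μ :=
      hindep.comp (fun j (x : ℝ) => x ^ E j) (fun j => measurable_id.pow_const _)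
    have hfint : ∀ j, Integrable (f j) μ := by
      intro j
      apply hpowint j
      by_cases h : j = g 0 <;> simp [hE, h] <;> omega
    have hEg : ∀ i : Fin (k + 1), E (g i) = if i = 0 then r - k else 1 := by
      intro i
      by_cases h : i = 0
      · simp [hE, h]
      · have : g i ≠ g 0 := fun hc => h (hg hc)
        simp [hE, this, h]
    have hterm : ∀ ω, X (g 0) ω ^ (r - k) * ∏ s : Fin k, X (g s.succ) ω
        = ∏ j ∈ (univ : Finset (Fin (k + 1))).image g, f j ω := by
      intro ω
      rw [Finset.prod_image (fun a _ b _ h => hg h)]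
      have : ∀ i : Fin (k + 1), f (g i) ω = X (g i) ω ^ (if i = 0 then r - k else 1) := by
        intro i; simp [hf, hEg i]
      simp only [this]
      rw [Fin.prod_univ_succ]
      simp [Fin.succ_ne_zero]
    have hmain := aux_prod_indep f hfindep hfm hfint ((univ : Finset (Fin (k + 1))).image g)
    constructor
    · have := hmain.1
      simpa only [← hterm] using this
    · have h1 : (∫ ω, X (g 0) ω ^ (r - k) * ∏ s : Fin k, X (g s.succ) ω ∂μ)
          = ∫ ω, ∏ j ∈ (univ : Finset (Fin (k + 1))).image g, f j ω ∂μ := by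
        congr 1; funext ω; exact hterm ω
      rw [h1, hmain.2]
      rw [Finset.prod_image (fun a _ b _ h => hg h)]
      have h2 : ∀ i : Fin (k + 1), (∫ ω, f (g i) ω ∂μ)
          = M (if i = 0 then r - k else 1) := by
        intro i
        have : f (g i) = fun ω => X (g i) ω ^ (if i = 0 then r - k else 1) := by
          funext ω; simp [hf, hEg i]
        rw [this, hpoweq]
      simp only [h2]
      rw [Fin.prod_univ_succ]
      simp [Fin.succ_ne_zero]
  -- cardinality of injective tuples
  have hcard : ∀ k : ℕ,
      ((univ : Finset (Fin (k + 1) → Fin n)).filter Function.Injective).card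
        = n.descFactorial (k + 1) := by
    intro k
    rw [← Fintype.card_subtype]
    rw [Fintype.card_congr (Equiv.subtypeInjectiveEquivEmbedding (Fin (k + 1)) (Fin n))]
    rw [Fintype.card_embedding_eq]
    simp
  -- integrability of the inner sums
  have hSint : ∀ k ∈ Finset.range (r + 1),
      Integrable (fun ω =>
        (r.choose k : ℝ) * ((-1 : ℝ) ^ k / (n.descFactorial (k + 1) : ℝ)) *
          ∑ g ∈ (univ : Finset (Fin (k + 1) → Fin n)).filter Function.Injective,
            X (g 0) ω ^ (r - k) * ∏ s : Fin k, X (g s.succ) ω) μ := by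
    intro k hk
    rw [Finset.mem_range] at hk
    apply Integrable.const_mul
    apply integrable_finset_sum
    intro g hg
    rw [Finset.mem_filter] at hg
    exact (key k (by omega) g hg.2).1
  rw [integral_finset_sum _ hSint]
  -- compute each term of the LHS
  have hLHS : ∀ k ∈ Finset.range (r + 1),
      (∫ ω, (r.choose k : ℝ) * ((-1 : ℝ) ^ k / (n.descFactorial (k + 1) : ℝ)) *
          ∑ g ∈ (univ : Finset (Fin (k + 1) → Fin n)).filter Function.Injective,
            X (g 0) ω ^ (r - k) * ∏ s : Fin k, X (g s.succ) ω ∂μ)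
        = (r.choose k : ℝ) * (-1 : ℝ) ^ k * (M (r - k) * M 1 ^ k) := by
    intro k hk
    rw [Finset.mem_range] at hk
    rw [integral_const_mul]
    rw [integral_finset_sum _ (fun g hg => by
      rw [Finset.mem_filter] at hg
      exact (key k (by omega) g hg.2).1)]
    have : ∀ g ∈ (univ : Finset (Fin (k + 1) → Fin n)).filter Function.Injective,
        (∫ ω, X (g 0) ω ^ (r - k) * ∏ s : Fin k, X (g s.succ) ω ∂μ)
          = M (r - k) * M 1 ^ k := by
      intro g hg
      rw [Finset.mem_filter] at hg
      exact (key k (by omega) g hg.2).2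
    rw [Finset.sum_congr rfl this, Finset.sum_const, hcard, nsmul_eq_mul]
    have hd : (n.descFactorial (k + 1) : ℝ) ≠ 0 := by
      have : n.descFactorial (k + 1) ≠ 0 := by
        rw [Ne, Nat.descFactorial_eq_zero_iff_lt]
        omega
      exact_mod_cast this
    have hdd : ((-1 : ℝ) ^ k / (n.descFactorial (k + 1) : ℝ)) * (n.descFactorial (k + 1) : ℝ)
        = (-1 : ℝ) ^ k := div_mul_cancel₀ _ hd
    calc (r.choose k : ℝ) * ((-1 : ℝ) ^ k / (n.descFactorial (k + 1) : ℝ)) *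
          ((n.descFactorial (k + 1) : ℝ) * (M (r - k) * M 1 ^ k))
        = (r.choose k : ℝ) * (((-1 : ℝ) ^ k / (n.descFactorial (k + 1) : ℝ)) *
            (n.descFactorial (k + 1) : ℝ)) * (M (r - k) * M 1 ^ k) := by ring
      _ = (r.choose k : ℝ) * (-1 : ℝ) ^ k * (M (r - k) * M 1 ^ k) := by rw [hdd]
  rw [Finset.sum_congr rfl hLHS]
  -- RHS: binomial expansion
  have hRHS : (∫ ω, (X i0 ω - M 1) ^ r ∂μ)
      = ∑ m ∈ Finset.range (r + 1),
          (-1 : ℝ) ^ (m + r) * M m * M 1 ^ (r - m) * (r.choose m : ℝ) := by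
    have hexp : ∀ ω, (X i0 ω - M 1) ^ r
        = ∑ m ∈ Finset.range (r + 1),
            (-1 : ℝ) ^ (m + r) * X i0 ω ^ m * M 1 ^ (r - m) * (r.choose m : ℝ) := by
      intro ω; exact sub_pow (X i0 ω) (M 1) r
    have h1 : (∫ ω, (X i0 ω - M 1) ^ r ∂μ)
        = ∫ ω, ∑ m ∈ Finset.range (r + 1),
            (-1 : ℝ) ^ (m + r) * X i0 ω ^ m * M 1 ^ (r - m) * (r.choose m : ℝ) ∂μ := by
      congr 1; funext ω; exact hexp ω
    rw [h1, integral_finset_sum]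
    · apply Finset.sum_congr rfl
      intro m hm
      rw [Finset.mem_range] at hm
      have : (fun ω => (-1 : ℝ) ^ (m + r) * X i0 ω ^ m * M 1 ^ (r - m) * (r.choose m : ℝ))
          = fun ω => ((-1 : ℝ) ^ (m + r) * M 1 ^ (r - m) * (r.choose m : ℝ)) * X i0 ω ^ m := by
        funext ω; ring
      rw [this, integral_const_mul, hpoweq]
      ring
    · intro m hm
      rw [Finset.mem_range] at hm
      have : (fun ω => (-1 : ℝ) ^ (m + r) * X i0 ω ^ m * M 1 ^ (r - m) * (r.choose m : ℝ))
          = fun ω => ((-1 : ℝ) ^ (m + r) * M 1 ^ (r - m) * (r.choose m : ℝ)) * X i0 ω ^ m := by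
        funext ω; ring
      rw [this]
      exact (hpowint i0 m (by omega)).const_mul _
  have hMeq : (∫ ω', X i0 ω' ∂μ) = M 1 := by
    rw [hM]; simp
  rw [show (∫ ω, (X i0 ω - ∫ ω', X i0 ω' ∂μ) ^ r ∂μ) = ∫ ω, (X i0 ω - M 1) ^ r ∂μ by
    rw [hMeq], hRHS]
  -- reindex
  conv_rhs => rw [← Finset.sum_range_reflect
    (fun m => (-1 : ℝ) ^ (m + r) * M m * M 1 ^ (r - m) * (r.choose m : ℝ)) (r + 1)]
  apply Finset.sum_congr rfl
  intro k hk
  rw [Finset.mem_range] at hk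

  have h1 : r + 1 - 1 - k = r - k := by omega
  rw [h1]
  have h2 : r - (r - k) = k := by omega
  rw [h2]
  have h3 : r.choose (r - k) = r.choose k := Nat.choose_symm (by omega)
  rw [h3]
  have h4 : (-1 : ℝ) ^ (r - k + r) = (-1 : ℝ) ^ k := by
    have he : r - k + r = 2 * (r - k) + k := by omega
    rw [he, pow_add, pow_mul, neg_one_sq, one_pow, one_mul]
  rw [h4]
  ring
end

section
/- Let R be a commutative ring, n and i positive integers, and p₁,…,p_i : {1,…,n} → R arbitrary functions. Then ∑_{f} ∏_{t=1}^{i} p_t(f(t)) = ∑_{π∈Π_i} ∏_{B∈π} (−1)^{|B|−1}(|B|−1)! · ( ∑_{l=1}^{n} ∏_{t∈B} p_t(l) ), where the left-hand sum ranges over all injective functions f : {1,…,i} → {1,…,n}. -/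
open Finset

section Aux
variable {α : Type*} [DecidableEq α]

lemma avoid_parts_erase {s : Finset α} (π : Finpartition s) {B : Finset α} (hB : B ∈ π.parts) :
    (π.avoid B).parts = π.parts.erase B := by
  ext c
  rw [Finpartition.mem_avoid, mem_erase]
  constructor
  · rintro ⟨d, hd, hdB, rfl⟩
    have hdne : d ≠ B := by
      rintro rfl; exact hdB le_rfl
    have hdisj : Disjoint d B := π.disjoint hd hB hdne
    rw [sdiff_eq_self_of_disjoint hdisj]
    exact ⟨hdne, hd⟩
  · rintro ⟨hcB, hc⟩
    have hdisj : Disjoint c B := π.disjoint hc hB hcB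
    refine ⟨c, hc, ?_, sdiff_eq_self_of_disjoint hdisj⟩
    intro hle
    exact π.bot_notMem (by simpa [hdisj.eq_bot_of_le hle] using hc)

/-- Re-attach a block `B` to a partition of `s \ B`. -/
noncomputable def put (s B : Finset α) (π : Finpartition (s \ B)) : Finpartition s :=
  if h : B.Nonempty ∧ B ⊆ s then
    π.extend (by simpa [← Finset.nonempty_iff_ne_empty] using h.1)
      sdiff_disjoint (by rw [sup_eq_union, sdiff_union_of_subset h.2])
  else ⊥

lemma put_parts {s B : Finset α} (hB : B.Nonempty) (hBs : B ⊆ s) (π : Finpartition (s \ B)) :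
    (put s B π).parts = insert B π.parts := by
  rw [put, dif_pos ⟨hB, hBs⟩, Finpartition.extend_parts]

lemma not_mem_parts_sdiff {s B : Finset α} (hB : B.Nonempty) (π : Finpartition (s \ B)) :
    B ∉ π.parts := by
  intro h
  have := π.le h
  obtain ⟨x, hx⟩ := hB
  have := this hx
  simp [hx] at this

variable [Fintype α]

lemma sum_finpartition_decomp {M : Type*} [AddCommMonoid M] (s : Finset α) (a : α) (ha : a ∈ s)
    (f : Finpartition s → M) :
    ∑ π : Finpartition s, f π
      = ∑ B ∈ univ.filter (fun B : Finset α => a ∈ B ∧ B ⊆ s),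
          ∑ π' : Finpartition (s \ B), f (put s B π') := by
  classical
  rw [← Finset.sum_sigma (univ.filter (fun B : Finset α => a ∈ B ∧ B ⊆ s))
    (fun B => (univ : Finset (Finpartition (s \ B)))) (fun x => f (put s x.1 x.2))]
  refine Finset.sum_nbij' (fun π => ⟨π.part a, π.avoid (π.part a)⟩)
    (fun x => put s x.1 x.2) ?_ ?_ ?_ ?_ ?_
  · intro π _
    simp only [Finset.mem_sigma, Finset.mem_filter, Finset.mem_univ, true_and]
    exact ⟨⟨π.mem_part ha, π.le (π.part_mem.2 ha)⟩, trivial⟩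
  · intro x _; exact Finset.mem_univ _
  · intro π _
    have hmem : π.part a ∈ π.parts := π.part_mem.2 ha
    have hne : (π.part a).Nonempty := π.nonempty_of_mem_parts hmem
    apply Finpartition.ext
    rw [put_parts hne (π.le hmem), avoid_parts_erase π hmem, Finset.insert_erase hmem]
  · rintro ⟨B, π'⟩ hx
    simp only [Finset.mem_sigma, Finset.mem_filter] at hx
    obtain ⟨⟨-, haB, hBs⟩, -⟩ := hx
    have hBne : B.Nonempty := ⟨a, haB⟩
    have hparts : (put s B π').parts = insert B π'.parts := put_parts hBne hBs π'
    have hBmem : B ∈ (put s B π').parts := by rw [hparts]; exact Finset.mem_insert_self _ _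
    have h1 : (put s B π').part a = B := Finpartition.part_eq_of_mem _ hBmem haB
    refine Sigma.ext h1 ?_
    show HEq ((put s B π').avoid ((put s B π').part a)) π'
    rw [h1, heq_iff_eq]
    have : (put s B π').avoid B = π' := by
      apply Finpartition.ext
      rw [avoid_parts_erase _ hBmem, hparts,
        Finset.erase_insert (not_mem_parts_sdiff hBne π')]
    exact this
  · intro π _
    have hmem : π.part a ∈ π.parts := π.part_mem.2 ha
    have hne : (π.part a).Nonempty := π.nonempty_of_mem_parts hmem
    congr 1
    apply Finpartition.ext
    rw [put_parts hne (π.le hmem), avoid_parts_erase π hmem, Finset.insert_erase hmem]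

end Aux

section Key
variable (R : Type*) [CommRing R]

/-- block weight -/
noncomputable def wgt (k : ℕ) : R := (-1 : R) ^ (k - 1) * ((k - 1).factorial : R)

lemma ite_and_mul {P Q : Prop} [Decidable P] [Decidable Q] (x y : R) :
    (if P ∧ Q then x * y else 0) = (if P then x else 0) * (if Q then y else 0) := by
  by_cases hP : P <;> by_cases hQ : Q <;> simp [hP, hQ]

variable {α β : Type*} [Fintype α] [DecidableEq α] [DecidableEq β]

lemma key_lemma (g : α → β) (s : Finset α) :
    (∑ π : Finpartition s,
        if (∀ B ∈ π.parts, ∀ x ∈ B, ∀ y ∈ B, g x = g y)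
          then ∏ B ∈ π.parts, wgt R B.card else 0)
      = if (∀ x ∈ s, ∀ y ∈ s, g x = g y → x = y) then 1 else 0 := by
  induction s using Finset.strongInduction with
  | _ s ih =>
  rcases s.eq_empty_or_nonempty with rfl | ⟨a, ha⟩
  · have hsub : Subsingleton (Finpartition (∅ : Finset α)) :=
      ⟨fun P Q => Finpartition.ext (by
        rw [Finpartition.parts_eq_empty_iff.2 rfl, Finpartition.parts_eq_empty_iff.2 rfl])⟩
    haveI := hsub
    haveI : Unique (Finpartition (∅ : Finset α)) := uniqueOfSubsingleton ⊥
    rw [Fintype.sum_unique]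
    have hparts : (default : Finpartition (∅ : Finset α)).parts = ∅ :=
      Finpartition.parts_eq_empty_iff.2 rfl
    simp [hparts]
  · rw [sum_finpartition_decomp s a ha]
    have hstep : ∀ B ∈ univ.filter (fun B : Finset α => a ∈ B ∧ B ⊆ s),
        (∑ π' : Finpartition (s \ B),
          if (∀ C ∈ (put s B π').parts, ∀ x ∈ C, ∀ y ∈ C, g x = g y)
            then ∏ C ∈ (put s B π').parts, wgt R C.card else 0)
        = if (∀ x ∈ B, ∀ y ∈ B, g x = g y) ∧ (∀ x ∈ s \ B, ∀ y ∈ s \ B, g x = g y → x = y)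
            then wgt R B.card else 0 := by
      intro B hB
      rw [Finset.mem_filter] at hB
      obtain ⟨-, haB, hBs⟩ := hB
      have hBne : B.Nonempty := ⟨a, haB⟩
      have heach : ∀ π' : Finpartition (s \ B),
          (if (∀ C ∈ (put s B π').parts, ∀ x ∈ C, ∀ y ∈ C, g x = g y)
            then ∏ C ∈ (put s B π').parts, wgt R C.card else 0)
          = (if (∀ x ∈ B, ∀ y ∈ B, g x = g y) then wgt R B.card else 0) *
            (if (∀ C ∈ π'.parts, ∀ x ∈ C, ∀ y ∈ C, g x = g y)
              then ∏ C ∈ π'.parts, wgt R C.card else 0) := by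
        intro π'
        simp only [put_parts hBne hBs, Finset.forall_mem_insert,
          Finset.prod_insert (not_mem_parts_sdiff hBne π'), ite_and_mul]
      rw [Finset.sum_congr rfl (fun π' _ => heach π'), ← Finset.mul_sum,
        ih (s \ B) (Finset.sdiff_ssubset hBs hBne) , ← ite_and_mul]
      by_cases h1 : (∀ x ∈ B, ∀ y ∈ B, g x = g y) ∧
          (∀ x ∈ s \ B, ∀ y ∈ s \ B, g x = g y → x = y) <;> simp [h1]
    rw [Finset.sum_congr rfl hstep, ← Finset.sum_filter, Finset.filter_filter]
    set V := univ.filter (fun B : Finset α => (a ∈ B ∧ B ⊆ s) ∧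
      (∀ x ∈ B, ∀ y ∈ B, g x = g y) ∧ (∀ x ∈ s \ B, ∀ y ∈ s \ B, g x = g y → x = y)) with hV
    by_cases hinj : ∀ x ∈ s, ∀ y ∈ s, g x = g y → x = y
    · rw [if_pos hinj]
      have hval : V = {({a} : Finset α)} := by
        ext B
        simp only [hV, Finset.mem_filter, Finset.mem_univ, true_and, Finset.mem_singleton]
        constructor
        · rintro ⟨⟨haB, hBs⟩, hconst, -⟩
          apply Finset.Subset.antisymm
          · intro x hx
            rw [Finset.mem_singleton]
            exact hinj x (hBs hx) a (hBs haB) (hconst x hx a haB)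
          · simpa using haB
        · rintro rfl
          refine ⟨⟨Finset.mem_singleton_self a, by simpa using ha⟩, ?_, ?_⟩
          · intro x hx y hy
            rw [Finset.mem_singleton] at hx hy; rw [hx, hy]
          · intro x hx y hy hxy
            rw [Finset.mem_sdiff] at hx hy
            exact hinj x hx.1 y hy.1 hxy
      rw [hval, Finset.sum_singleton]
      simp [wgt]
    · rw [if_neg hinj]
      set F := s.filter (fun x => g x = g a) with hF
      have haF : a ∈ F := by simp [hF, ha]
      have hsubF : ∀ B : Finset α, a ∈ B → B ⊆ s → (∀ x ∈ B, ∀ y ∈ B, g x = g y) → B ⊆ F := by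
        intro B haB hBs hconst x hx
        simp only [hF, Finset.mem_filter]
        exact ⟨hBs hx, hconst x hx a haB⟩
      by_cases h2 : ∀ x ∈ s \ F, ∀ y ∈ s \ F, g x = g y → x = y
      · -- the fiber of a has size ≥ 2
        have hFs : F ⊆ s := Finset.filter_subset _ _
        have hk2 : 2 ≤ F.card := by
          by_contra hk
          push_neg at hk
          have hFa : ∀ x ∈ F, x = a := by
            intro x hx
            exact Finset.card_le_one.1 (by omega) x hx a haF
          apply hinj
          intro x hx y hy hxy
          by_cases hxa : g x = g a
          · have hx' : x ∈ F := by simp [hF, hx, hxa]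
            have hy' : y ∈ F := by simp [hF, hy, ← hxy, hxa]
            rw [hFa x hx', hFa y hy']
          · have hx' : x ∈ s \ F := by simp [hF, Finset.mem_sdiff, hx, hxa]
            have hy' : y ∈ s \ F := by simp [hF, Finset.mem_sdiff, hy, ← hxy, hxa]
            exact h2 x hx' y hy' hxy
        have hval : V = insert F ((F.erase a).image (fun x => F.erase x)) := by
          ext B
          simp only [hV, Finset.mem_filter, Finset.mem_univ, true_and, Finset.mem_insert,
            Finset.mem_image, Finset.mem_erase]
          constructor
          · rintro ⟨⟨haB, hBs⟩, hconst, hinjB⟩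
            have hBF : B ⊆ F := hsubF B haB hBs hconst
            have hsub : ∀ x ∈ F \ B, ∀ y ∈ F \ B, x = y := by
              intro x hx y hy
              rw [Finset.mem_sdiff] at hx hy
              have hgx : g x = g a := (Finset.mem_filter.1 hx.1).2
              have hgy : g y = g a := (Finset.mem_filter.1 hy.1).2
              exact hinjB x (Finset.mem_sdiff.2 ⟨hFs hx.1, hx.2⟩)
                y (Finset.mem_sdiff.2 ⟨hFs hy.1, hy.2⟩) (hgx.trans hgy.symm)
            rcases (F \ B).eq_empty_or_nonempty with hFB | ⟨x, hx⟩
            · left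
              exact Finset.Subset.antisymm hBF
                (by rwa [← Finset.sdiff_eq_empty_iff_subset])
            · right
              refine ⟨x, ⟨?_, (Finset.mem_sdiff.1 hx).1⟩, ?_⟩
              · rintro rfl
                exact (Finset.mem_sdiff.1 hx).2 haB
              · ext y
                rw [Finset.mem_erase]
                constructor
                · rintro ⟨hyx, hyF⟩
                  by_contra hyB
                  exact hyx (hsub y (Finset.mem_sdiff.2 ⟨hyF, hyB⟩) x hx)
                · intro hy
                  refine ⟨?_, hBF hy⟩
                  rintro rfl
                  exact (Finset.mem_sdiff.1 hx).2 hy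
          · rintro (rfl | ⟨x, ⟨hxa, hxF⟩, rfl⟩)
            · refine ⟨⟨haF, hFs⟩, ?_, h2⟩
              intro x hx y hy
              rw [(Finset.mem_filter.1 hx).2, (Finset.mem_filter.1 hy).2]
            · have hxs : x ∈ s := hFs hxF
              have hsd : s \ F.erase x = insert x (s \ F) := by
                ext y
                simp only [Finset.mem_sdiff, Finset.mem_erase, Finset.mem_insert, not_and]
                constructor
                · rintro ⟨hys, hy⟩
                  by_cases hyx : y = x
                  · exact Or.inl hyx
                  · exact Or.inr ⟨hys, hy hyx⟩
                · rintro (rfl | ⟨hys, hyF⟩)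
                  · exact ⟨hxs, fun h => absurd rfl h⟩
                  · exact ⟨hys, fun _ => hyF⟩
              refine ⟨⟨Finset.mem_erase.2 ⟨Ne.symm hxa, haF⟩, (Finset.erase_subset _ _).trans hFs⟩,
                ?_, ?_⟩
              · intro u hu v hv
                rw [(Finset.mem_filter.1 (Finset.mem_of_mem_erase hu)).2,
                  (Finset.mem_filter.1 (Finset.mem_of_mem_erase hv)).2]
              · rw [hsd]
                intro u hu v hv huv
                rw [Finset.mem_insert] at hu hv
                have hgx : g x = g a := (Finset.mem_filter.1 hxF).2
                rcases hu with rfl | hu <;> rcases hv with rfl | hv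
                · rfl
                · exfalso
                  rw [Finset.mem_sdiff, hF, Finset.mem_filter] at hv
                  exact hv.2 ⟨hv.1, huv ▸ hgx⟩
                · exfalso
                  rw [Finset.mem_sdiff, hF, Finset.mem_filter] at hu
                  exact hu.2 ⟨hu.1, huv.symm ▸ hgx⟩
                · exact h2 u hu v hv huv
        have hFnot : F ∉ (F.erase a).image (fun x => F.erase x) := by
          rw [Finset.mem_image]
          rintro ⟨x, hx, hEx⟩
          have hxF : x ∈ F := Finset.mem_of_mem_erase hx
          rw [← hEx] at hxF
          exact (Finset.notMem_erase x F) hxF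
        have hinjE : Set.InjOn (fun x => F.erase x) (F.erase a) := by
          intro x hx y hy hxy
          by_contra hne
          have hxy' : F.erase x = F.erase y := hxy
          have hxF : x ∈ F := Finset.mem_of_mem_erase (Finset.mem_coe.1 hx)
          have : x ∈ F.erase y := Finset.mem_erase.2 ⟨hne, hxF⟩
          rw [← hxy'] at this
          exact (Finset.notMem_erase x F) this
        rw [hval, Finset.sum_insert hFnot, Finset.sum_image hinjE]
        have hterm : ∀ x ∈ F.erase a, wgt R (F.erase x).card = wgt R (F.card - 1) := by
          intro x hx
          rw [Finset.card_erase_of_mem (Finset.mem_of_mem_erase hx)]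
        rw [Finset.sum_congr rfl hterm, Finset.sum_const,
          Finset.card_erase_of_mem haF]
        obtain ⟨m, hm⟩ : ∃ m, F.card = m + 2 := ⟨F.card - 2, by omega⟩
        rw [hm]
        simp only [wgt, Nat.add_sub_cancel, nsmul_eq_mul]
        norm_num [Nat.factorial_succ]
        push_cast
        ring
      · -- no valid block at all
        have hval : V = ∅ := by
          rw [Finset.eq_empty_iff_forall_notMem]
          intro B hB
          simp only [hV, Finset.mem_filter, Finset.mem_univ, true_and] at hB
          obtain ⟨⟨haB, hBs⟩, hconst, hinjB⟩ := hB
          have hBF : B ⊆ F := hsubF B haB hBs hconst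
          apply h2
          intro x hx y hy hxy
          have hmono : s \ F ⊆ s \ B := Finset.sdiff_subset_sdiff (le_refl s) hBF
          exact hinjB x (hmono hx) y (hmono hy) hxy
        rw [hval, Finset.sum_empty]

end Key

section Expand
variable {R : Type*} [CommRing R] {α γ : Type*} [Fintype α] [DecidableEq α]
  [Fintype γ] [DecidableEq γ]

lemma prod_sum_parts (π : Finpartition (univ : Finset α)) (q : α → γ → R) :
    ∏ B ∈ π.parts, ∑ l : γ, ∏ t ∈ B, q t l
      = ∑ g ∈ (univ : Finset (α → γ)).filter
          (fun g => ∀ B ∈ π.parts, ∀ x ∈ B, ∀ y ∈ B, g x = g y),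
          ∏ t : α, q t (g t) := by
  classical
  rw [Finset.prod_sum π.parts (fun _ => (univ : Finset γ)) (fun B l => ∏ t ∈ B, q t l)]
  refine Finset.sum_nbij' (fun x => (fun t => x (π.part t) (π.part_mem.2 (mem_univ t))))
    (fun g => (fun B hB => g (π.nonempty_of_mem_parts hB).choose)) ?_ ?_ ?_ ?_ ?_
  · intro x hx
    rw [Finset.mem_filter]
    refine ⟨Finset.mem_univ _, fun B hB u hu v hv => ?_⟩
    have h : ∀ (C D : Finset α) (hC : C ∈ π.parts) (hD : D ∈ π.parts) (hCD : C = D),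
        x C hC = x D hD := by
      rintro C D hC hD rfl; rfl
    exact h _ _ _ _ ((π.part_eq_of_mem hB hu).trans (π.part_eq_of_mem hB hv).symm)
  · intro g hg
    rw [Finset.mem_pi]
    intro B hB
    exact Finset.mem_univ _
  · intro x hx
    funext B hB
    have h : ∀ (C D : Finset α) (hC : C ∈ π.parts) (hD : D ∈ π.parts) (hCD : C = D),
        x C hC = x D hD := by
      rintro C D hC hD rfl; rfl
    exact h _ _ _ _ (π.part_eq_of_mem hB (π.nonempty_of_mem_parts hB).choose_spec)
  · intro g hg
    rw [Finset.mem_filter] at hg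
    funext t
    set B := π.part t with hB
    have hBmem : B ∈ π.parts := π.part_mem.2 (mem_univ t)
    exact hg.2 B hBmem _ (π.nonempty_of_mem_parts hBmem).choose_spec t (π.mem_part (mem_univ t))
  · intro x hx
    have h : ∀ (C D : Finset α) (hC : C ∈ π.parts) (hD : D ∈ π.parts) (hCD : C = D),
        x C hC = x D hD := by
      rintro C D hC hD rfl; rfl
    have step1 : ∏ B ∈ π.parts.attach, ∏ t ∈ B.1, q t (x B.1 B.2)
        = ∏ B ∈ π.parts, ∏ t ∈ B, q t (x (π.part t) (π.part_mem.2 (mem_univ t))) := by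
      rw [← Finset.prod_attach π.parts
        (fun B => ∏ t ∈ B, q t (x (π.part t) (π.part_mem.2 (mem_univ t))))]
      refine Finset.prod_congr rfl fun B _ => Finset.prod_congr rfl fun t ht => ?_
      rw [h B.1 (π.part t) B.2 (π.part_mem.2 (mem_univ t)) (π.part_eq_of_mem B.2 ht).symm]
    have step2 : ∏ B ∈ π.parts, ∏ t ∈ B, q t (x (π.part t) (π.part_mem.2 (mem_univ t)))
        = ∏ t ∈ π.parts.biUnion id, q t (x (π.part t) (π.part_mem.2 (mem_univ t))) :=
      (Finset.prod_biUnion π.disjoint).symm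
    rw [step1, step2, π.biUnion_parts]

end Expand


lemma sum_ite_inst {ι M : Type*} [Fintype ι] [AddCommMonoid M] (P : ι → Prop) (f : ι → M)
    (i1 i2 : ∀ x, Decidable (P x)) :
    (∑ x, @ite _ (P x) (i1 x) (f x) 0) = ∑ x, @ite _ (P x) (i2 x) (f x) 0 := by
  refine Finset.sum_congr rfl fun x _ => ?_
  rw [Subsingleton.elim (i1 x) (i2 x)]

lemma ite_inst {M : Type*} (P : Prop) (x y : M) (i1 i2 : Decidable P) :
    @ite _ P i1 x y = @ite _ P i2 x y := by
  rw [Subsingleton.elim i1 i2]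

set_option maxHeartbeats 1000000 in
theorem injective_sum_eq_partition_sum
    (R : Type*) [CommRing R] (n i : ℕ) (hn : 0 < n) (hi : 0 < i)
    (p : Fin i → Fin n → R) :
    ∑ f ∈ (univ : Finset (Fin i → Fin n)).filter Function.Injective,
        ∏ t : Fin i, p t (f t)
      = ∑ π : Finpartition (univ : Finset (Fin i)),
          ∏ B ∈ π.parts,
            ((-1 : R) ^ (B.card - 1) * ((B.card - 1).factorial : R) *
              ∑ l : Fin n, ∏ t ∈ B, p t l) := by
  symm
  calc
    ∑ π : Finpartition (univ : Finset (Fin i)), ∏ B ∈ π.parts,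
        ((-1 : R) ^ (B.card - 1) * ((B.card - 1).factorial : R) *
          ∑ l : Fin n, ∏ t ∈ B, p t l)
        = ∑ π : Finpartition (univ : Finset (Fin i)),
            ∑ g : Fin i → Fin n,
              (if (∀ B ∈ π.parts, ∀ x ∈ B, ∀ y ∈ B, g x = g y)
                then ∏ B ∈ π.parts, wgt R B.card else 0) *
              ∏ t : Fin i, p t (g t) := by
          refine Finset.sum_congr rfl fun π _ => ?_
          have h1 : ∀ B ∈ π.parts,
              (-1 : R) ^ (B.card - 1) * ((B.card - 1).factorial : R) *
                (∑ l : Fin n, ∏ t ∈ B, p t l)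
              = wgt R B.card * ∑ l : Fin n, ∏ t ∈ B, p t l := fun B _ => by rw [wgt]
          rw [Finset.prod_congr rfl h1, Finset.prod_mul_distrib, prod_sum_parts π p,
            Finset.mul_sum, Finset.sum_filter]
          simp only [ite_mul, zero_mul]
          exact sum_ite_inst _ _ _ _
    _ = ∑ g : Fin i → Fin n,
          (∑ π : Finpartition (univ : Finset (Fin i)),
            if (∀ B ∈ π.parts, ∀ x ∈ B, ∀ y ∈ B, g x = g y)
              then ∏ B ∈ π.parts, wgt R B.card else 0) *
          ∏ t : Fin i, p t (g t) := by
          rw [Finset.sum_comm]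
          exact Finset.sum_congr rfl fun g _ => (Finset.sum_mul _ _ _).symm
    _ = ∑ f ∈ (univ : Finset (Fin i → Fin n)).filter Function.Injective,
          ∏ t : Fin i, p t (f t) := by
          rw [Finset.sum_filter]
          refine Finset.sum_congr rfl fun g _ => ?_
          have h0 := key_lemma R g (univ : Finset (Fin i))
          have h1 : (∑ π : Finpartition (univ : Finset (Fin i)),
              if (∀ B ∈ π.parts, ∀ x ∈ B, ∀ y ∈ B, g x = g y)
                then ∏ B ∈ π.parts, wgt R B.card else 0)
              = if (∀ x ∈ (univ : Finset (Fin i)), ∀ y ∈ univ, g x = g y → x = y)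
                  then 1 else 0 := ((sum_ite_inst _ _ _ _).trans h0).trans (ite_inst _ _ _ _ _)
          rw [h1]
          have hiff : (∀ x ∈ (univ : Finset (Fin i)), ∀ y ∈ univ, g x = g y → x = y)
              ↔ Function.Injective g := by
            constructor
            · intro h u v huv
              exact h u (mem_univ u) v (mem_univ v) huv
            · intro h u _ v _ huv
              exact h huv
          by_cases hg : Function.Injective g
          · rw [if_pos (hiff.2 hg), if_pos hg, one_mul]
          · rw [if_neg (fun hc => hg (hiff.1 hc)), if_neg hg, zero_mul]
end

section
/- Let R be a commutative ring, n and i positive integers, and p₁,…,p_i : {1,…,n} → R arbitrary functions. Then ∏_{t=1}^{i} ( ∑_{l=1}^{n} p_t(l) ) = ∑_{π∈Π_i} ∑_{f} ∏_{B∈π} ∏_{t∈B} p_t(f(B)), where the inner sum ranges over all injective functions f from the blocks of π to {1,…,n}. -/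
open Finset

section Aux

variable {i n : ℕ}

instance kerDecidable (g : Fin i → Fin n) : DecidableRel ⇑(Setoid.ker g) :=
  fun a b => decidable_of_iff (g a = g b) Iff.rfl

/-- The finpartition of `Fin i` into fibers of `g`. -/
def fiberPartition (g : Fin i → Fin n) : Finpartition (univ : Finset (Fin i)) :=
  Finpartition.ofSetoid (Setoid.ker g)

lemma mem_part_fiberPartition (g : Fin i → Fin n) (a b : Fin i) :
    b ∈ (fiberPartition g).part a ↔ g a = g b := by
  exact Finpartition.mem_part_ofSetoid_iff_rel

lemma g_eq_of_mem_part (g : Fin i → Fin n) {B : Finset (Fin i)}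
    (hB : B ∈ (fiberPartition g).parts) {a b : Fin i} (ha : a ∈ B) (hb : b ∈ B) :
    g a = g b := by
  have h1 : (fiberPartition g).part a = B :=
    (fiberPartition g).part_eq_of_mem hB ha
  rw [← h1] at hb
  exact (mem_part_fiberPartition g a b).1 hb

/-- The value of `g` on a block of its fiber partition. -/
def fiberValue (g : Fin i → Fin n)
    (B : {B // B ∈ (fiberPartition g).parts}) : Fin n :=
  g (B.1.min' ((fiberPartition g).nonempty_of_mem_parts B.2))

lemma fiberValue_eq (g : Fin i → Fin n) (B : {B // B ∈ (fiberPartition g).parts})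
    {t : Fin i} (ht : t ∈ B.1) : fiberValue g B = g t :=
  g_eq_of_mem_part g B.2 (B.1.min'_mem _) ht

lemma fiberValue_injective (g : Fin i → Fin n) : Function.Injective (fiberValue g) := by
  rintro ⟨B, hB⟩ ⟨C, hC⟩ h
  have hb := B.min'_mem ((fiberPartition g).nonempty_of_mem_parts hB)
  have hc := C.min'_mem ((fiberPartition g).nonempty_of_mem_parts hC)
  have h1 : (fiberPartition g).part (B.min' _) = B :=
    (fiberPartition g).part_eq_of_mem hB hb
  have h2 : (fiberPartition g).part (C.min' _) = C :=
    (fiberPartition g).part_eq_of_mem hC hc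
  have : (C.min' ((fiberPartition g).nonempty_of_mem_parts hC)) ∈
      (fiberPartition g).part (B.min' ((fiberPartition g).nonempty_of_mem_parts hB)) :=
    (mem_part_fiberPartition g _ _).2 h
  rw [h1] at this
  exact Subtype.ext ((fiberPartition g).eq_of_mem_parts hB hC this hc)

lemma parts_eq_image_part {α : Type*} [DecidableEq α] [Fintype α]
    (P : Finpartition (univ : Finset α)) :
    P.parts = Finset.image P.part univ := by
  ext B
  simp only [mem_image, mem_univ, true_and]
  constructor
  · intro hB
    obtain ⟨a, ha⟩ := P.nonempty_of_mem_parts hB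
    exact ⟨a, P.part_eq_of_mem hB ha⟩
  · rintro ⟨a, rfl⟩
    exact P.part_mem.2 (mem_univ a)

lemma finpartition_ext_part {α : Type*} [DecidableEq α] [Fintype α]
    {P Q : Finpartition (univ : Finset α)} (h : ∀ a, P.part a = Q.part a) : P = Q := by
  have hparts : P.parts = Q.parts := by
    rw [parts_eq_image_part, parts_eq_image_part]
    exact Finset.image_congr (fun a _ => h a)
  ext B
  rw [hparts]

lemma sigma_mk_eq {π π' : Finpartition (univ : Finset (Fin i))} (h : π = π')
    (f : {B // B ∈ π.parts} → Fin n) (f' : {B // B ∈ π'.parts} → Fin n)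
    (hff : ∀ (B : Finset (Fin i)) (h1 : B ∈ π.parts) (h2 : B ∈ π'.parts),
      f ⟨B, h1⟩ = f' ⟨B, h2⟩) :
    (⟨π, f⟩ : Σ π : Finpartition (univ : Finset (Fin i)),
        ({B // B ∈ π.parts} → Fin n)) = ⟨π', f'⟩ := by
  subst h
  congr 1
  funext B
  exact hff B.1 B.2 B.2

end Aux

/-- For arbitrary functions `p₁,…,p_i : {1,…,n} → R`,
`∏_{t=1}^i (∑_{l=1}^n p_t(l)) = ∑_{π ∈ Π_i} ∑_{f} ∏_{B ∈ π} ∏_{t ∈ B} p_t(f(B))`,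
where the inner sum ranges over injective functions `f` from the blocks of `π` to `{1,…,n}`. -/
theorem product_of_sums_eq_partition_injective_sum
    (R : Type*) [CommRing R] (n i : ℕ) (hn : 0 < n) (hi : 0 < i)
    (p : Fin i → Fin n → R) :
    ∏ t : Fin i, (∑ l : Fin n, p t l)
      = ∑ π : Finpartition (univ : Finset (Fin i)),
          ∑ f ∈ (univ : Finset ({B // B ∈ π.parts} → Fin n)).filter Function.Injective,
            ∏ B : {B // B ∈ π.parts}, ∏ t ∈ B.val, p t (f B) := by
  classical
  rw [Fintype.prod_sum]
  rw [Finset.sum_sigma']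
  refine Finset.sum_bij' (i := fun g _ => ⟨fiberPartition g, fiberValue g⟩)
    (j := fun x _ => fun t => x.2 ⟨x.1.part t, x.1.part_mem.2 (mem_univ t)⟩)
    ?_ ?_ ?_ ?_ ?_
  · intro g _
    simp only [Finset.mem_sigma, mem_univ, mem_filter, true_and]
    exact fiberValue_injective g
  · intro x _
    exact mem_univ _
  · -- left inverse
    intro g _
    funext t
    exact fiberValue_eq g _ ((fiberPartition g).mem_part (mem_univ t))
  · -- right inverse
    rintro ⟨π, f⟩ hx
    simp only [Finset.mem_sigma, mem_univ, mem_filter, true_and] at hx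
    set g : Fin i → Fin n := fun t => f ⟨π.part t, π.part_mem.2 (mem_univ t)⟩ with hg
    have hpart : ∀ a, (fiberPartition g).part a = π.part a := by
      intro a
      ext b
      rw [mem_part_fiberPartition]
      constructor
      · intro h
        have h' : f ⟨π.part a, π.part_mem.2 (mem_univ a)⟩ = f ⟨π.part b, π.part_mem.2 (mem_univ b)⟩ :=
          h
        have h2 : π.part a = π.part b := congrArg Subtype.val (hx h')
        rw [h2]; exact π.mem_part (mem_univ b)
      · intro h
        have h2 : π.part b = π.part a := π.part_eq_of_mem (π.part_mem.2 (mem_univ a)) h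
        exact (congrArg f (Subtype.ext h2.symm) :
          f ⟨π.part a, π.part_mem.2 (mem_univ a)⟩ = f ⟨π.part b, π.part_mem.2 (mem_univ b)⟩)
    refine sigma_mk_eq (finpartition_ext_part hpart) _ _ ?_
    intro B h1 h2
    obtain ⟨a, ha⟩ := π.nonempty_of_mem_parts h2
    have hBa : π.part a = B := π.part_eq_of_mem h2 ha
    have hmin : B.min' ((fiberPartition g).nonempty_of_mem_parts h1) ∈ B := B.min'_mem _
    exact (congrArg f (Subtype.ext (π.part_eq_of_mem h2 hmin)) :
      f ⟨π.part _, π.part_mem.2 (mem_univ _)⟩ = f ⟨B, h2⟩)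
  · -- products equal
    intro g _
    have h1 : ∀ B : {B // B ∈ (fiberPartition g).parts},
        ∏ t ∈ B.1, p t (fiberValue g B) = ∏ t ∈ B.1, p t (g t) :=
      fun B => Finset.prod_congr rfl fun t ht => by rw [fiberValue_eq g B ht]
    calc ∏ t : Fin i, p t (g t)
        = ∏ B ∈ (fiberPartition g).parts, ∏ t ∈ B, p t (g t) := by
          conv_lhs => rw [← (fiberPartition g).biUnion_parts]
          exact Finset.prod_biUnion ((fiberPartition g).supIndep.pairwiseDisjoint)
      _ = ∏ B : {B // B ∈ (fiberPartition g).parts}, ∏ t ∈ B.1, p t (g t) :=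
          (Finset.prod_subtype _ (fun _ => Iff.rfl) _)
      _ = ∏ B : {B // B ∈ (fiberPartition g).parts}, ∏ t ∈ B.1, p t (fiberValue g B) := by
          exact Finset.prod_congr rfl fun B _ => (h1 B).symm
end

section
/- Let R be a commutative ring, n and k positive integers, x₁,…,xₙ ∈ R, and n₁,…,n_k positive integers. Then ∑_{f} ∏_{t=1}^{k} x_{f(t)}^{n_t} = ∑_{π∈Π_k} ∏_{B∈π} (−1)^{|B|−1}(|B|−1)! · s_{m_B}(x₁,…,xₙ), where the left-hand sum ranges over all injective functions f : {1,…,k} → {1,…,n} and m_B = ∑_{t∈B} n_t. This expresses the augmented monomial symmetric polynomials in terms of products of power sum symmetric polynomials. -/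
open Finset

namespace AugMono

variable {ι : Type*} [DecidableEq ι] {s : Finset ι} {a : ι}

lemma not_mem_part (ha : a ∉ s) (π : Finpartition s) {C : Finset ι} (hC : C ∈ π.parts) : a ∉ C :=
  fun h => ha (π.le hC h)

lemma singleton_not_mem (ha : a ∉ s) (π : Finpartition s) : {a} ∉ π.parts :=
  fun h => not_mem_part ha π h (mem_singleton_self a)

lemma insertA_not_mem (ha : a ∉ s) (π : Finpartition s) (B C : Finset ι) :
    insert a B ∉ π.parts.erase C :=
  fun h => not_mem_part ha π (mem_of_mem_erase h) (mem_insert_self a B)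

/-- Insert `{a}` as a new singleton part. -/
def insNone (ha : a ∉ s) (π : Finpartition s) : Finpartition (insert a s) where
  parts := insert {a} π.parts
  supIndep := by
    rw [supIndep_iff_pairwiseDisjoint, coe_insert]
    refine π.disjoint.insert ?_
    intro C hC _
    simp only [id]
    rw [disjoint_singleton_left]
    exact not_mem_part ha π hC
  sup_parts := by
    rw [sup_insert, π.sup_parts]
    rw [sup_eq_union]; ext t; simp [or_comm]
  bot_notMem := by
    simp only [bot_eq_empty, mem_insert, not_or]
    exact ⟨fun h => (singleton_ne_empty a) h.symm, π.bot_notMem⟩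

/-- Insert `a` into the part `B`. -/
def insSome (ha : a ∉ s) (π : Finpartition s) (B : Finset ι) (hB : B ∈ π.parts) :
    Finpartition (insert a s) where
  parts := insert (insert a B) (π.parts.erase B)
  supIndep := by
    rw [supIndep_iff_pairwiseDisjoint, coe_insert]
    refine Set.PairwiseDisjoint.insert (π.disjoint.subset ?_) ?_
    · rw [coe_subset]; exact erase_subset _ _
    · intro C hC _
      rw [mem_coe, mem_erase] at hC
      simp only [id]
      rw [disjoint_insert_left]
      exact ⟨not_mem_part ha π hC.2, π.disjoint hB hC.2 (fun h => hC.1 h.symm)⟩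
  sup_parts := by
    have h1 : B ⊔ (π.parts.erase B).sup id = s := by
      have h2 := π.sup_parts
      rw [← insert_erase hB, sup_insert] at h2
      exact h2
    rw [sup_insert]
    show insert a B ⊔ _ = _
    rw [sup_eq_union, insert_union, ← sup_eq_union, h1]
  bot_notMem := by
    simp only [bot_eq_empty, mem_insert, not_or]
    refine ⟨fun h => (insert_ne_empty a B) h.symm, fun h => π.bot_notMem (mem_of_mem_erase h)⟩

@[simp] lemma insNone_parts (ha : a ∉ s) (π : Finpartition s) :
    (insNone ha π).parts = insert {a} π.parts := rfl

@[simp] lemma insSome_parts (ha : a ∉ s) (π : Finpartition s) (B : Finset ι) (hB : B ∈ π.parts) :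
    (insSome ha π B hB).parts = insert (insert a B) (π.parts.erase B) := rfl

/-- The insertion bijection. -/
def Φ (ha : a ∉ s) : (Σ π : Finpartition s, Option {B // B ∈ π.parts}) → Finpartition (insert a s)
  | ⟨π, none⟩ => insNone ha π
  | ⟨π, some B⟩ => insSome ha π B.1 B.2


lemma Φ_bijective (ha : a ∉ s) : Function.Bijective (Φ ha) := by
  constructor
  · rintro ⟨π, o⟩ ⟨π', o'⟩ h
    have hp := congrArg Finpartition.parts h
    match o, o' with
    | none, none =>
      simp only [Φ, insNone_parts] at hp
      have hpp : π.parts = π'.parts := by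
        have := congrArg (fun t => Finset.erase t ({a} : Finset ι)) hp
        simpa [erase_insert (singleton_not_mem ha π), erase_insert (singleton_not_mem ha π')]
          using this
      obtain rfl : π = π' := Finpartition.ext hpp
      rfl
    | none, some ⟨B, hB⟩ =>
      exfalso
      simp only [Φ, insNone_parts, insSome_parts] at hp
      have h1 : ({a} : Finset ι) ∈ insert (insert a B) (π'.parts.erase B) :=
        hp ▸ mem_insert_self _ _
      rcases mem_insert.1 h1 with h2 | h2
      · obtain ⟨b, hb⟩ := π'.nonempty_of_mem_parts hB
        have : b ∈ ({a} : Finset ι) := h2 ▸ mem_insert_of_mem hb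
        rw [mem_singleton] at this
        exact not_mem_part ha π' hB (this ▸ hb)
      · exact singleton_not_mem ha π' (mem_of_mem_erase h2)
    | some ⟨B, hB⟩, none =>
      exfalso
      simp only [Φ, insNone_parts, insSome_parts] at hp
      have h1 : ({a} : Finset ι) ∈ insert (insert a B) (π.parts.erase B) :=
        hp ▸ mem_insert_self _ _
      rcases mem_insert.1 h1 with h2 | h2
      · obtain ⟨b, hb⟩ := π.nonempty_of_mem_parts hB
        have : b ∈ ({a} : Finset ι) := h2 ▸ mem_insert_of_mem hb
        rw [mem_singleton] at this
        exact not_mem_part ha π hB (this ▸ hb)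
      · exact singleton_not_mem ha π (mem_of_mem_erase h2)
    | some ⟨B, hB⟩, some ⟨B', hB'⟩ =>
      simp only [Φ, insSome_parts] at hp
      have h1 : insert a B ∈ insert (insert a B') (π'.parts.erase B') :=
        hp ▸ mem_insert_self _ _
      have hBB' : insert a B = insert a B' := by
        rcases mem_insert.1 h1 with h2 | h2
        · exact h2
        · exact absurd h2 (insertA_not_mem ha π' B B')
      have hB2 : B = B' := by
        have haB : a ∉ B := fun h => ha (π.le hB h)
        have haB' : a ∉ B' := fun h => ha (π'.le hB' h)
        rw [← erase_insert haB, hBB', erase_insert haB']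
      subst hB2
      have herase : π.parts.erase B = π'.parts.erase B := by
        have := congrArg (fun t => Finset.erase t (insert a B)) hp
        simpa [erase_insert (insertA_not_mem ha π B B), erase_insert (insertA_not_mem ha π' B B)]
          using this
      have hpp : π.parts = π'.parts := by
        rw [← insert_erase hB, herase, insert_erase hB']
      obtain rfl : π = π' := Finpartition.ext hpp
      rfl
  · intro σ
    have hAmem : σ.part a ∈ σ.parts := σ.part_mem.2 (mem_insert_self a s)
    have haA : a ∈ σ.part a := σ.mem_part (mem_insert_self a s)
    have hsub : ∀ C ∈ σ.parts, C ≠ σ.part a → C ⊆ s := by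
      intro C hC hne t ht
      rcases mem_insert.1 (σ.le hC ht) with rfl | h
      · exact absurd (σ.part_eq_of_mem hC ht) hne.symm
      · exact h
    by_cases hAa : σ.part a = {a}
    · -- preimage (π, none)
      have hsup : (σ.parts.erase (σ.part a)).sup id = s := by
        apply subset_antisymm
        · show (σ.parts.erase (σ.part a)).sup id ≤ s
          refine Finset.sup_le fun C hC => ?_
          exact hsub C (mem_of_mem_erase hC) (ne_of_mem_erase hC)
        · intro t ht
          obtain ⟨C, hC, htC⟩ := σ.exists_mem (mem_insert_of_mem ht)
          have hCne : C ≠ σ.part a := by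
            rintro rfl
            rw [hAa, mem_singleton] at htC
            exact ha (htC ▸ ht)
          exact Finset.mem_sup.2 ⟨C, mem_erase.2 ⟨hCne, hC⟩, htC⟩
      refine ⟨⟨σ.ofSubset (erase_subset _ _) hsup, none⟩, ?_⟩
      apply Finpartition.ext
      show insert {a} (σ.parts.erase (σ.part a)) = σ.parts
      rw [← hAa, insert_erase hAmem]
    · -- preimage (π, some B)
      set A := σ.part a with hA
      have hBne : A.erase a ≠ ∅ := by
        intro hh
        rcases (erase_eq_empty_iff A a).1 hh with h | h
        · exact notMem_empty a (h ▸ haA)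
        · exact hAa h
      have hBs : A.erase a ⊆ s := by
        intro t ht
        rcases mem_insert.1 (σ.le hAmem (mem_of_mem_erase ht)) with rfl | h
        · exact absurd rfl (ne_of_mem_erase ht)
        · exact h
      have hsupe : (σ.parts.erase A).sup id ≤ s :=
        Finset.sup_le fun C hC => hsub C (mem_of_mem_erase hC) (ne_of_mem_erase hC)
      refine ⟨⟨⟨insert (A.erase a) (σ.parts.erase A), ?_, ?_, ?_⟩, some ⟨A.erase a, mem_insert_self _ _⟩⟩, ?_⟩
      · rw [supIndep_iff_pairwiseDisjoint, coe_insert]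
        refine Set.PairwiseDisjoint.insert (σ.disjoint.subset ?_) ?_
        · rw [coe_subset]; exact erase_subset _ _
        · intro C hC hne
          rw [mem_coe, mem_erase] at hC
          exact Disjoint.mono_left (erase_subset a A) (σ.disjoint hAmem hC.2 (fun h => hC.1 h.symm))
      · rw [sup_insert]
        apply subset_antisymm
        · rw [sup_eq_union]
          exact union_subset hBs hsupe
        · intro t ht
          obtain ⟨C, hC, htC⟩ := σ.exists_mem (mem_insert_of_mem ht)
          rw [sup_eq_union, mem_union]
          by_cases hCA : C = A
          · left
            subst hCA
            exact mem_erase.2 ⟨fun h => ha (h ▸ ht), htC⟩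
          · right
            exact Finset.mem_sup.2 ⟨C, mem_erase.2 ⟨hCA, hC⟩, htC⟩
      · simp only [bot_eq_empty, mem_insert, not_or]
        exact ⟨fun h => hBne h.symm, fun h => σ.bot_notMem (mem_of_mem_erase h)⟩
      · apply Finpartition.ext
        have hab : insert a (A.erase a) = A := insert_erase haA
        have hBnotin : A.erase a ∉ σ.parts.erase A := by
          intro h
          have hne := ne_of_mem_erase h
          have hd := σ.disjoint (mem_of_mem_erase h) hAmem hne
          obtain ⟨b, hb⟩ := nonempty_iff_ne_empty.2 hBne
          exact (Finset.disjoint_left.1 hd) hb (erase_subset a A hb)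
        show insert (insert a (A.erase a))
            ((insert (A.erase a) (σ.parts.erase A)).erase (A.erase a)) = σ.parts
        rw [erase_insert hBnotin, hab, insert_erase hAmem]


section Alg

variable {R : Type*} [CommRing R] {n : ℕ}

/-- coefficient-times-powersum factor -/
def coeff (x : Fin n → R) (m : ι → ℕ) (B : Finset ι) : R :=
  (-1) ^ (B.card - 1) * ((B.card - 1).factorial : R) * ∑ l : Fin n, x l ^ (∑ t ∈ B, m t)

lemma coeff_singleton (x : Fin n → R) (m : ι → ℕ) (b : ι) :
    coeff x m {b} = ∑ l : Fin n, x l ^ m b := by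
  simp [coeff]

lemma stepB (ha : a ∉ s) (x : Fin n → R) (nn : ι → ℕ) :
    ∑ π : Finpartition (insert a s), ∏ B ∈ π.parts, coeff x nn B
    = (∑ l : Fin n, x l ^ nn a) * (∑ π : Finpartition s, ∏ B ∈ π.parts, coeff x nn B)
      - ∑ j ∈ s, ∑ π : Finpartition s, ∏ B ∈ π.parts,
          coeff x (Function.update nn j (nn j + nn a)) B := by
  rw [← Function.Bijective.sum_comp (Φ_bijective ha) (fun σ => ∏ B ∈ σ.parts, coeff x nn B)]
  rw [← Finset.univ_sigma_univ, Finset.sum_sigma]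
  have perπ : ∀ π : Finpartition s,
      (∑ o : Option {B // B ∈ π.parts}, ∏ B ∈ (Φ ha ⟨π, o⟩).parts, coeff x nn B)
      = (∑ l : Fin n, x l ^ nn a) * ∏ B ∈ π.parts, coeff x nn B
        - ∑ j ∈ s, ∏ B ∈ π.parts, coeff x (Function.update nn j (nn j + nn a)) B := by
    intro π
    rw [Fintype.sum_option]
    have hnone : ∏ B ∈ (Φ ha ⟨π, none⟩).parts, coeff x nn B
        = (∑ l : Fin n, x l ^ nn a) * ∏ B ∈ π.parts, coeff x nn B := by
      show ∏ B ∈ insert {a} π.parts, coeff x nn B = _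
      rw [prod_insert (singleton_not_mem ha π), coeff_singleton]
    have hsome : ∀ B : {B // B ∈ π.parts},
        ∏ C ∈ (Φ ha ⟨π, some B⟩).parts, coeff x nn C
        = coeff x nn (insert a B.1) * ∏ C ∈ π.parts.erase B.1, coeff x nn C := by
      rintro ⟨B, hB⟩
      show ∏ C ∈ insert (insert a B) (π.parts.erase B), coeff x nn C = _
      rw [prod_insert (insertA_not_mem ha π B B)]
    rw [hnone, Finset.sum_congr rfl (fun B _ => hsome B),
      Finset.sum_coe_sort π.parts
        (fun B => coeff x nn (insert a B) * ∏ C ∈ π.parts.erase B, coeff x nn C)]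
    have hkey : ∑ j ∈ s, ∏ B ∈ π.parts, coeff x (Function.update nn j (nn j + nn a)) B
        = - ∑ B ∈ π.parts, coeff x nn (insert a B) * ∏ C ∈ π.parts.erase B, coeff x nn C := by
      rw [Finset.sum_congr π.biUnion_parts.symm (fun j _ => rfl),
        Finset.sum_biUnion π.disjoint]
      simp only [id_eq]
      have perB : ∀ B₀ ∈ π.parts,
          ∑ j ∈ B₀, ∏ B ∈ π.parts, coeff x (Function.update nn j (nn j + nn a)) B
          = -(coeff x nn (insert a B₀) * ∏ C ∈ π.parts.erase B₀, coeff x nn C) := by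
        intro B₀ hB₀
        have hane : a ∉ B₀ := not_mem_part ha π hB₀
        have hcard : 0 < B₀.card := card_pos.2 (π.nonempty_of_mem_parts hB₀)
        have hjterm : ∀ j ∈ B₀,
            ∏ B ∈ π.parts, coeff x (Function.update nn j (nn j + nn a)) B
            = ((-1 : R) ^ (B₀.card - 1) * ((B₀.card - 1).factorial : R)
                * ∑ l : Fin n, x l ^ (∑ t ∈ B₀, nn t + nn a))
              * ∏ C ∈ π.parts.erase B₀, coeff x nn C := by
          intro j hj
          rw [← Finset.mul_prod_erase π.parts _ hB₀]
          congr 1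
          · have hsum : ∑ t ∈ B₀, Function.update nn j (nn j + nn a) t
                = ∑ t ∈ B₀, nn t + nn a := by
              rw [Finset.sum_update_of_mem hj, sdiff_singleton_eq_erase,
                ← Finset.add_sum_erase B₀ nn hj]
              ring
            simp only [coeff, hsum]
          · refine Finset.prod_congr rfl fun C hC => ?_
            have hjC : j ∉ C := by
              have hd := π.disjoint hB₀ (mem_of_mem_erase hC)
                (fun h => (ne_of_mem_erase hC) h.symm)
              exact fun h => Finset.disjoint_left.1 hd hj h
            have hsum : ∑ t ∈ C, Function.update nn j (nn j + nn a) t = ∑ t ∈ C, nn t :=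
              Finset.sum_congr rfl fun t ht =>
                Function.update_of_ne (fun h => hjC (by rw [← h]; exact ht)) _ _
            simp only [coeff, hsum]
        rw [Finset.sum_congr rfl hjterm, Finset.sum_const]
        have hci : (insert a B₀).card = B₀.card + 1 := card_insert_of_notMem hane
        have hsi : ∑ t ∈ insert a B₀, nn t = nn a + ∑ t ∈ B₀, nn t := sum_insert hane
        have hcomm : nn a + ∑ t ∈ B₀, nn t = ∑ t ∈ B₀, nn t + nn a := Nat.add_comm _ _
        obtain ⟨c, hc⟩ : ∃ c, B₀.card = c + 1 :=
          ⟨B₀.card - 1, (Nat.succ_pred_eq_of_pos hcard).symm⟩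
        simp only [coeff, hci, hsi, hcomm, hc, Nat.add_sub_cancel, nsmul_eq_mul]
        push_cast [Nat.factorial_succ]
        ring
      rw [Finset.sum_congr rfl perB, Finset.sum_neg_distrib]
    rw [hkey]
    ring
  rw [Finset.sum_congr rfl (fun π _ => perπ π), Finset.sum_sub_distrib, ← Finset.mul_sum,
    Finset.sum_comm]


lemma hupd (x : Fin n → R) (nn : ι → ℕ) (g : ↥s → Fin n) (j : ↥s) (a : ι) :
    x (g j) ^ nn a * ∏ t : ↥s, x (g t) ^ nn ↑t
    = ∏ t : ↥s, x (g t) ^ (Function.update nn ↑j (nn ↑j + nn a)) ↑t := by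
  rw [← Finset.mul_prod_erase univ (fun t => x (g t) ^ nn ↑t) (mem_univ j),
    ← Finset.mul_prod_erase univ
      (fun t => x (g t) ^ (Function.update nn ↑j (nn ↑j + nn a)) ↑t) (mem_univ j)]
  have h1 : ∀ t ∈ univ.erase j,
      x (g t) ^ (Function.update nn ↑j (nn ↑j + nn a)) ↑t = x (g t) ^ nn ↑t := by
    intro t ht
    rw [Function.update_of_ne (fun h => (mem_erase.1 ht).1 (Subtype.ext h))]
  rw [Finset.prod_congr rfl h1, Function.update_self, pow_add]
  ring

lemma stepA (ha : a ∉ s) (x : Fin n → R) (nn : ι → ℕ) :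
    ∑ f ∈ (univ : Finset (↥(insert a s) → Fin n)).filter Function.Injective,
        ∏ t : ↥(insert a s), x (f t) ^ nn ↑t
    = (∑ l : Fin n, x l ^ nn a) *
        ∑ f ∈ (univ : Finset (↥s → Fin n)).filter Function.Injective,
          ∏ t : ↥s, x (f t) ^ nn ↑t
      - ∑ j ∈ s, ∑ f ∈ (univ : Finset (↥s → Fin n)).filter Function.Injective,
          ∏ t : ↥s, x (f t) ^ (Function.update nn j (nn j + nn a)) ↑t := by
  classical
  set Ψ : Fin n × (↥s → Fin n) → (↥(insert a s) → Fin n) :=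
    fun p t => if h : (t : ι) = a then p.1
      else p.2 ⟨t, (mem_insert.mp t.2).resolve_left h⟩ with hΨ
  have hvala : ∀ (v : Fin n) (g : ↥s → Fin n), Ψ (v, g) ⟨a, mem_insert_self a s⟩ = v := by
    intro v g; simp [hΨ]
  have hval : ∀ (v : Fin n) (g : ↥s → Fin n) (t : ↥s),
      Ψ (v, g) ⟨t, mem_insert_of_mem t.2⟩ = g t := by
    intro v g t
    have h : (t : ι) ≠ a := fun h => ha (h ▸ t.2)
    simp [hΨ, h]
  have hvala' : ∀ (v : Fin n) (g : ↥s → Fin n) (t : ↥(insert a s)), (t : ι) = a →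
      Ψ (v, g) t = v := by
    intro v g t h
    show (if h : (t : ι) = a then v else _) = v
    rw [dif_pos h]
  have hval' : ∀ (v : Fin n) (g : ↥s → Fin n) (t : ↥(insert a s)) (h : (t : ι) ≠ a),
      Ψ (v, g) t = g ⟨t, (mem_insert.mp t.2).resolve_left h⟩ := by
    intro v g t h
    show (if h : (t : ι) = a then v else _) = _
    rw [dif_neg h]
  have hbij : Function.Bijective Ψ := by
    rw [Function.bijective_iff_has_inverse]
    refine ⟨fun f => (f ⟨a, mem_insert_self a s⟩, fun t => f ⟨t, mem_insert_of_mem t.2⟩),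
      ?_, ?_⟩
    · rintro ⟨v, g⟩
      refine Prod.ext (hvala v g) ?_
      funext t
      exact hval v g t
    · intro f
      funext t
      by_cases h : (t : ι) = a
      · rw [hvala' (f ⟨a, mem_insert_self a s⟩) _ t h]
        exact congrArg f (Subtype.ext h.symm)
      · rw [hval' _ _ t h]
  have hinj : ∀ (v : Fin n) (g : ↥s → Fin n),
      Function.Injective (Ψ (v, g)) ↔ Function.Injective g ∧ ∀ j, g j ≠ v := by
    intro v g
    constructor
    · intro hf
      constructor
      · intro j j' hjj'
        have h2 := hf (a₁ := ⟨j, mem_insert_of_mem j.2⟩) (a₂ := ⟨j', mem_insert_of_mem j'.2⟩)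
          (by rw [hval, hval, hjj'])
        have h3 : (j : ι) = (j' : ι) := congrArg (fun z : ↥(insert a s) => (z : ι)) h2
        exact Subtype.ext h3
      · intro j hj
        have h2 := hf (a₁ := ⟨j, mem_insert_of_mem j.2⟩) (a₂ := ⟨a, mem_insert_self a s⟩)
          (by rw [hval, hvala, hj])
        have h3 : (j : ι) = a := congrArg (fun z : ↥(insert a s) => (z : ι)) h2
        exact ha (h3 ▸ j.2)
    · rintro ⟨hg, hgv⟩ t t' htt'
      by_cases h : (t : ι) = a <;> by_cases h' : (t' : ι) = a
      · exact Subtype.ext (h.trans h'.symm)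
      · exact absurd (by rw [← hval' v g t' h', ← htt', hvala' v g t h]) (hgv _)
      · exact absurd (by rw [← hval' v g t h, htt', hvala' v g t' h']) (hgv _)
      · have h4 : g ⟨(t : ι), (mem_insert.mp t.2).resolve_left h⟩
            = g ⟨(t' : ι), (mem_insert.mp t'.2).resolve_left h'⟩ := by
          rw [← hval' v g t h, ← hval' v g t' h', htt']
        have h5 := hg h4
        have h6 : (t : ι) = (t' : ι) := congrArg (fun z : ↥s => (z : ι)) h5
        exact Subtype.ext h6
  have hprod : ∀ (v : Fin n) (g : ↥s → Fin n),
      ∏ t : ↥(insert a s), x (Ψ (v, g) t) ^ nn ↑t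
      = x v ^ nn a * ∏ t : ↥s, x (g t) ^ nn ↑t := by
    intro v g
    rw [← Equiv.prod_comp (Finset.subtypeInsertEquivOption ha).symm
      (fun t => x (Ψ (v, g) t) ^ nn ↑t), Fintype.prod_option]
    congr 1
    · rw [show (Finset.subtypeInsertEquivOption ha).symm none
          = ⟨a, mem_insert_self a s⟩ from rfl, hvala]
    · refine Finset.prod_congr rfl fun t _ => ?_
      rw [show (Finset.subtypeInsertEquivOption ha).symm (some t)
          = ⟨(t : ι), mem_insert_of_mem t.2⟩ from rfl, hval]
  simp only [sum_filter]
  rw [← Function.Bijective.sum_comp hbij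
    (fun f => if Function.Injective f then ∏ t : ↥(insert a s), x (f t) ^ nn ↑t else 0),
    Fintype.sum_prod_type]
  have key : ∀ (v : Fin n) (g : ↥s → Fin n),
      (if Function.Injective (Ψ (v, g)) then ∏ t : ↥(insert a s), x (Ψ (v, g) t) ^ nn ↑t else 0)
      = (if Function.Injective g then
          (if ∀ j, g j ≠ v then x v ^ nn a else 0) * ∏ t : ↥s, x (g t) ^ nn ↑t else 0) := by
    intro v g
    by_cases h1 : Function.Injective g
    · by_cases h2 : ∀ j, g j ≠ v
      · rw [if_pos ((hinj v g).2 ⟨h1, h2⟩), hprod, if_pos h1, if_pos h2]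
      · rw [if_neg (fun hh => h2 ((hinj v g).1 hh).2), if_pos h1, if_neg h2, zero_mul]
    · rw [if_neg (fun hh => h1 ((hinj v g).1 hh).1), if_neg h1]
  rw [Finset.sum_congr rfl fun v _ => Finset.sum_congr rfl fun g _ => key v g,
    Finset.sum_comm]
  have inner : ∀ g : ↥s → Fin n,
      (∑ v : Fin n, if Function.Injective g then
          (if ∀ j, g j ≠ v then x v ^ nn a else 0) * ∏ t : ↥s, x (g t) ^ nn ↑t else 0)
      = (if Function.Injective g then
          ((∑ l : Fin n, x l ^ nn a) - ∑ j : ↥s, x (g j) ^ nn a)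
            * ∏ t : ↥s, x (g t) ^ nn ↑t else 0) := by
    intro g
    by_cases h1 : Function.Injective g
    · simp only [if_pos h1]
      rw [← Finset.sum_mul]
      congr 1
      have hv : ∀ v : Fin n, (if ∀ j, g j ≠ v then x v ^ nn a else 0)
          = x v ^ nn a - (if v ∈ Finset.image g univ then x v ^ nn a else 0) := by
        intro v
        by_cases h2 : ∀ j, g j ≠ v
        · rw [if_pos h2, if_neg, sub_zero]
          intro hmem
          obtain ⟨j, _, hj⟩ := mem_image.1 hmem
          exact h2 j hj
        · rw [if_neg h2]
          push_neg at h2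
          obtain ⟨j, hj⟩ := h2
          rw [if_pos (mem_image.2 ⟨j, mem_univ j, hj⟩), sub_self]
      rw [Finset.sum_congr rfl fun v _ => hv v, Finset.sum_sub_distrib]
      congr 1
      rw [Finset.sum_ite_mem, univ_inter, Finset.sum_image (fun i _ j _ h => h1 h)]
    · simp only [if_neg h1, Finset.sum_const_zero]
  rw [Finset.sum_congr rfl fun g _ => inner g]
  have expand : ∀ g : ↥s → Fin n,
      (if Function.Injective g then
          ((∑ l : Fin n, x l ^ nn a) - ∑ j : ↥s, x (g j) ^ nn a)
            * ∏ t : ↥s, x (g t) ^ nn ↑t else 0)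
      = (∑ l : Fin n, x l ^ nn a)
          * (if Function.Injective g then ∏ t : ↥s, x (g t) ^ nn ↑t else 0)
        - ∑ j : ↥s, (if Function.Injective g then
            ∏ t : ↥s, x (g t) ^ (Function.update nn ↑j (nn ↑j + nn a)) ↑t else 0) := by
    intro g
    by_cases h1 : Function.Injective g
    · simp only [if_pos h1]
      rw [sub_mul]
      congr 1
      rw [Finset.sum_mul]
      exact Finset.sum_congr rfl fun j _ => hupd x nn g j a
    · simp only [if_neg h1, mul_zero, Finset.sum_const_zero, sub_zero]
  rw [Finset.sum_congr rfl fun g _ => expand g, Finset.sum_sub_distrib, ← Finset.mul_sum,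
    Finset.sum_comm]
  congr 1
  exact Finset.sum_coe_sort s (fun j => ∑ f : ↥s → Fin n,
    if Function.Injective f then
      ∏ t : ↥s, x (f t) ^ (Function.update nn j (nn j + nn a)) ↑t else 0)


lemma aux (x : Fin n → R) (s : Finset ι) : ∀ nn : ι → ℕ,
    ∑ f ∈ (univ : Finset (↥s → Fin n)).filter Function.Injective,
        ∏ t : ↥s, x (f t) ^ nn ↑t
    = ∑ π : Finpartition s, ∏ B ∈ π.parts, coeff x nn B := by
  induction s using Finset.induction_on with
  | empty =>
    intro nn
    haveI : IsEmpty (↥(∅ : Finset ι)) := Finset.isEmpty_coe_sort.2 rfl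
    have h1 : (univ : Finset (↥(∅ : Finset ι) → Fin n)).filter Function.Injective = univ :=
      filter_true_of_mem fun f _ p q _ => Subsingleton.elim p q
    have h2 : ∀ f : ↥(∅ : Finset ι) → Fin n, ∏ t : ↥(∅ : Finset ι), x (f t) ^ nn ↑t = 1 := by
      intro f
      rw [Finset.univ_eq_empty, prod_empty]
    have h3 : ∀ π : Finpartition (∅ : Finset ι), π.parts = ∅ := fun π =>
      Finpartition.parts_eq_empty_iff.2 Finset.bot_eq_empty.symm
    haveI : Unique (Finpartition (∅ : Finset ι)) :=
      (inferInstance : Unique (Finpartition (⊥ : Finset ι)))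
    haveI : Unique (↥(∅ : Finset ι) → Fin n) :=
      ⟨⟨fun t => isEmptyElim t⟩, fun f => funext fun t => isEmptyElim t⟩
    have hLHS : ∑ f ∈ (univ : Finset (↥(∅ : Finset ι) → Fin n)).filter Function.Injective,
        ∏ t : ↥(∅ : Finset ι), x (f t) ^ nn ↑t = 1 := by
      rw [h1, Finset.sum_congr rfl fun f _ => h2 f, Finset.sum_const, card_univ,
        Fintype.card_unique, one_smul]
    have hRHS : ∑ π : Finpartition (∅ : Finset ι), ∏ B ∈ π.parts, coeff x nn B = 1 := by
      rw [Finset.sum_congr rfl (fun (π : Finpartition (∅ : Finset ι)) _ =>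
          (by rw [h3 π, prod_empty] : ∏ B ∈ π.parts, coeff x nn B = 1)),
        Finset.sum_const, card_univ, Fintype.card_unique, one_smul]
    rw [hLHS, hRHS]
  | @insert a s ha ih =>
    intro nn
    rw [stepA ha x nn, stepB ha x nn, ih nn]
    congr 1
    exact Finset.sum_congr rfl fun j _ => ih _

end Alg

end AugMono

/-- For `x₁,…,xₙ ∈ R` and positive integers `n₁,…,n_k`,
`∑_{f : [k] ↪ [n]} ∏_t x_{f(t)}^{n_t}
   = ∑_{π ∈ Π_k} ∏_{B ∈ π} (−1)^{|B|−1}(|B|−1)! · s_{m_B}(x)`, with `m_B = ∑_{t ∈ B} n_t`: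
augmented monomial symmetric polynomials in terms of power sums. -/
theorem augmented_monomial_in_terms_of_power_sums
    (R : Type*) [CommRing R] (n k : ℕ) (hn : 0 < n) (hk : 0 < k)
    (x : Fin n → R) (nn : Fin k → ℕ) (hnn : ∀ t, 0 < nn t) :
    ∑ f ∈ (univ : Finset (Fin k → Fin n)).filter Function.Injective,
        ∏ t : Fin k, x (f t) ^ nn t
      = ∑ π : Finpartition (univ : Finset (Fin k)),
          ∏ B ∈ π.parts,
            ((-1 : R) ^ (B.card - 1) * ((B.card - 1).factorial : R) *
              ∑ l : Fin n, x l ^ (∑ t ∈ B, nn t)) := by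
  classical
  have h := AugMono.aux x (univ : Finset (Fin k)) nn
  set Θ : (↥(univ : Finset (Fin k)) → Fin n) → (Fin k → Fin n) :=
    fun f t => f ⟨t, mem_univ t⟩ with hΘ
  have hbij : Function.Bijective Θ := by
    rw [Function.bijective_iff_has_inverse]
    exact ⟨fun f t => f ↑t, fun f => rfl, fun f => rfl⟩
  have hinj : ∀ f, Function.Injective (Θ f) ↔ Function.Injective f := by
    intro f
    constructor
    · intro hf t t' htt'
      have h2 : Θ f ↑t = Θ f ↑t' := htt'
      exact Subtype.ext (hf h2)
    · intro hf u u' huu'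
      have h2 := hf (a₁ := ⟨u, mem_univ u⟩) (a₂ := ⟨u', mem_univ u'⟩) huu'
      exact congrArg (fun z : ↥(univ : Finset (Fin k)) => (z : Fin k)) h2
  have hprodeq : ∀ f : ↥(univ : Finset (Fin k)) → Fin n,
      ∏ t : Fin k, x (Θ f t) ^ nn t = ∏ t : ↥(univ : Finset (Fin k)), x (f t) ^ nn ↑t :=
    fun f => (Fintype.prod_equiv (Equiv.subtypeUnivEquiv mem_univ)
      (fun t => x (f t) ^ nn ↑t) (fun t => x (Θ f t) ^ nn t) (fun t => rfl)).symm
  calc ∑ f ∈ (univ : Finset (Fin k → Fin n)).filter Function.Injective,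
        ∏ t : Fin k, x (f t) ^ nn t
      = ∑ f : Fin k → Fin n, if Function.Injective f then ∏ t : Fin k, x (f t) ^ nn t else 0 :=
        sum_filter _ _
    _ = ∑ f : ↥(univ : Finset (Fin k)) → Fin n,
          if Function.Injective (Θ f) then ∏ t : Fin k, x (Θ f t) ^ nn t else 0 :=
        (Function.Bijective.sum_comp hbij _).symm
    _ = ∑ f : ↥(univ : Finset (Fin k)) → Fin n,
          if Function.Injective f then ∏ t : ↥(univ : Finset (Fin k)), x (f t) ^ nn ↑t else 0 := by
        refine Finset.sum_congr rfl fun f _ => ?_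
        rw [hprodeq f]
        by_cases h1 : Function.Injective f
        · rw [if_pos ((hinj f).2 h1), if_pos h1]
        · rw [if_neg (fun hh => h1 ((hinj f).1 hh)), if_neg h1]
    _ = ∑ f ∈ (univ : Finset (↥(univ : Finset (Fin k)) → Fin n)).filter Function.Injective,
          ∏ t : ↥(univ : Finset (Fin k)), x (f t) ^ nn ↑t := (sum_filter _ _).symm
    _ = ∑ π : Finpartition (univ : Finset (Fin k)), ∏ B ∈ π.parts, AugMono.coeff x nn B := h
    _ = ∑ π : Finpartition (univ : Finset (Fin k)),
          ∏ B ∈ π.parts,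
            ((-1 : R) ^ (B.card - 1) * ((B.card - 1).factorial : R) *
              ∑ l : Fin n, x l ^ (∑ t ∈ B, nn t)) := rfl
end
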